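/- arXiv:1307.1169 — 9 statements merged into one kernel-verified Lean document; each statement's English description precedes it below -/
import Mathlib

section
/- Let ℓ : ZMod n → ℝ be an injective function (cylindrical semi-bar lengths in cyclic order), and define a graph G on ZMod n where i and j are adjacent iff going around the cycle from i to j in at least one of the two directions, at most k intermediate vertices t satisfy ℓ(t) > min(ℓ(i), ℓ(j)). Then for n ≥ 2k+2, G has exactly (k+1)(2n−2k−3) edges, and for n ≤ 2k+2, G is the complete graph with n(n−1)/2 edges. -/
open Finset
open scoped Classical

variable {n : ℕ}

/-- The open cyclic arc from `i` to `j` (going in the positive direction), excluding both. -/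
def Arc [NeZero n] (i j : ZMod n) : Finset (ZMod n) :=
  univ.filter fun t => 0 < (t - i).val ∧ (t - i).val < (j - i).val

/-- Number of bars on the open arc from `i` to `j` strictly longer than the shorter of `i, j`. -/
noncomputable def exceedCount [NeZero n] (ℓ : ZMod n → ℝ) (i j : ZMod n) : ℕ :=
  ((Arc i j).filter fun t => min (ℓ i) (ℓ j) < ℓ t).card

/-- The cylindrical semi-bar `k`-visibility graph: `i ≠ j` are adjacent iff on one of the two
open cyclic arcs between them at most `k` bars are longer than `min (ℓ i) (ℓ j)`. -/
noncomputable def CylGraph (k : ℕ) [NeZero n] (ℓ : ZMod n → ℝ) : SimpleGraph (ZMod n) where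
  Adj i j := i ≠ j ∧ (exceedCount ℓ i j ≤ k ∨ exceedCount ℓ j i ≤ k)
  symm := ⟨fun i j h => ⟨h.1.symm, h.2.symm⟩⟩
  loopless := ⟨fun i h => h.1 rfl⟩

noncomputable instance (k : ℕ) [NeZero n] (ℓ : ZMod n → ℝ) :
    DecidableRel (CylGraph k ℓ).Adj := Classical.decRel _

/-! ### Auxiliary lemmas -/

lemma cylGraph_adj (k : ℕ) [NeZero n] (ℓ : ZMod n → ℝ) (i j : ZMod n) :
    (CylGraph k ℓ).Adj i j ↔ i ≠ j ∧ (exceedCount ℓ i j ≤ k ∨ exceedCount ℓ j i ≤ k) :=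
  Iff.rfl

/-- Generic counting lemma: in a finset of naturals, the number of elements having at most `k`
elements below or at most `k` elements above is `min card (2k+2)`. -/
lemma key_count (S : Finset ℕ) (k : ℕ) :
    (S.filter fun s => (S.filter (· < s)).card ≤ k ∨ (S.filter (s < ·)).card ≤ k).card
      = min S.card (2 * k + 2) := by
  classical
  set m := S.card with hm
  set below : ℕ → ℕ := fun s => (S.filter (· < s)).card with hbelow
  have hmono : ∀ s ∈ S, ∀ s' ∈ S, s < s' → below s < below s' := by
    intro s hs s' hs' hss
    apply Finset.card_lt_card
    refine ⟨Finset.monotone_filter_right S ?_, fun hsub => ?_⟩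
    · intro x _ hx; exact lt_trans hx hss
    · have h1 : s ∈ S.filter (· < s') := mem_filter.2 ⟨hs, hss⟩
      have h2 := mem_filter.1 (hsub h1)
      exact lt_irrefl s h2.2
  have hinjOn : Set.InjOn below S := by
    intro s hs s' hs' h
    by_contra hne
    rcases Ne.lt_or_gt hne with hlt | hlt
    · exact absurd h (Nat.ne_of_lt (hmono s hs s' hs' hlt))
    · exact absurd h.symm (Nat.ne_of_lt (hmono s' hs' s hs hlt))
  have hbelow_lt : ∀ s ∈ S, below s < m := by
    intro s hs
    apply Finset.card_lt_card
    refine ⟨Finset.filter_subset _ _, fun hsub => ?_⟩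
    have h2 := mem_filter.1 (hsub hs)
    exact lt_irrefl s h2.2
  have himage : S.image below = range m := by
    apply Finset.eq_of_subset_of_card_le
    · intro r hr
      obtain ⟨s, hs, rfl⟩ := mem_image.1 hr
      exact mem_range.2 (hbelow_lt s hs)
    · rw [card_range, Finset.card_image_of_injOn hinjOn]
  have habove : ∀ s ∈ S, (S.filter (s < ·)).card = m - 1 - below s := by
    intro s hs
    have h1 : (S.filter (· < s)).card + (S.filter (fun x => ¬ x < s)).card = m :=
      Finset.card_filter_add_card_filter_not _
    have h2 : S.filter (fun x => ¬ x < s) = insert s (S.filter (s < ·)) := by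
      ext x
      simp only [mem_filter, mem_insert, not_lt]
      constructor
      · rintro ⟨hx, hsx⟩
        rcases eq_or_lt_of_le hsx with h | h
        · exact Or.inl h.symm
        · exact Or.inr ⟨hx, h⟩
      · rintro (rfl | ⟨hx, h⟩)
        · exact ⟨hs, le_refl _⟩
        · exact ⟨hx, le_of_lt h⟩
    have h3 : s ∉ S.filter (s < ·) := by simp
    rw [h2, Finset.card_insert_of_notMem h3] at h1
    have hb : below s = (S.filter (fun x => x < s)).card := rfl
    omega
  have hfact : S.filter (fun s => (S.filter (· < s)).card ≤ k ∨ (S.filter (s < ·)).card ≤ k)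
       = S.filter (fun s => below s ≤ k ∨ m - 1 - below s ≤ k) :=
    Finset.filter_congr (fun s hs => by rw [habove s hs])
  rw [hfact]
  have hcard : (S.filter fun s => below s ≤ k ∨ m - 1 - below s ≤ k).card
       = ((S.image below).filter fun r => r ≤ k ∨ m - 1 - r ≤ k).card := by
    rw [Finset.filter_image, Finset.card_image_of_injOn (hinjOn.mono (Finset.filter_subset _ _))]
  rw [hcard, himage]
  have hset : (range m).filter (fun r => r ≤ k ∨ m - 1 - r ≤ k)
      = range m \ Finset.Ico (k+1) (m - k - 1) := by
    ext r
    simp only [mem_filter, mem_range, mem_sdiff, Finset.mem_Ico]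
    omega
  have hsub : Finset.Ico (k+1) (m - k - 1) ⊆ range m := by
    intro r hr
    rw [mem_range]
    have := Finset.mem_Ico.1 hr
    omega
  rw [hset, Finset.card_sdiff_of_subset hsub, card_range, Nat.card_Ico]
  omega

lemma sub_ne_zero_val [NeZero n] {a b : ZMod n} (h : a ≠ b) : 0 < (a - b).val := by
  apply Nat.pos_of_ne_zero
  intro h0
  exact h (sub_eq_zero.1 ((ZMod.val_eq_zero _).1 h0))

/-- Complement arc membership: for `t ≠ i`, `t` lies on the arc from `j` to `i` iff
its clockwise distance from `i` exceeds that of `j`. -/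
lemma mem_arc_compl [NeZero n] {i j t : ZMod n} (hij : i ≠ j) (hti : t ≠ i) :
    t ∈ Arc j i ↔ (j - i).val < (t - i).val := by
  have hn : 0 < n := NeZero.pos n
  have ha : 0 < (t - i).val := sub_ne_zero_val hti
  have hb : 0 < (j - i).val := sub_ne_zero_val (fun h => hij h.symm)
  have ha' : (t - i).val < n := ZMod.val_lt _
  have hb' : (j - i).val < n := ZMod.val_lt _
  have hij' : (i - j).val = n - (j - i).val := by
    have : i - j = -(j - i) := by ring
    rw [this, ZMod.neg_val, if_neg (sub_ne_zero.2 (Ne.symm hij))]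
  have htj : t - j = (t - i) - (j - i) := by ring
  rcases lt_or_ge ((j - i).val) ((t - i).val) with hlt | hle
  · have hv : (t - j).val = (t - i).val - (j - i).val := by
      rw [htj, ZMod.val_sub (le_of_lt hlt)]
    simp only [Arc, mem_filter, mem_univ, true_and, hv, hij']
    omega
  · rcases eq_or_lt_of_le hle with heq | hlt'
    · have : t = j := by
        have h2 : t - i = j - i := ZMod.val_injective n heq
        exact sub_left_injective h2
      subst this
      simp only [Arc, mem_filter, mem_univ, true_and, sub_self, ZMod.val_zero]
      omega
    · have htj2 : t - j = -((j - i) - (t - i)) := by ring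
      have hji : ((j - i) - (t - i)).val = (j - i).val - (t - i).val :=
        ZMod.val_sub (le_of_lt hlt')
      have hne : (j - i) - (t - i) ≠ 0 := by
        intro h0
        rw [h0, ZMod.val_zero] at hji
        omega
      have hv : (t - j).val = n - ((j - i).val - (t - i).val) := by
        rw [htj2, ZMod.neg_val, if_neg hne, hji]
      simp only [Arc, mem_filter, mem_univ, true_and, hv, hij']
      omega

/-- The number of neighbours of `i` that are taller than `i` is
`min (number of taller vertices) (2k+2)`. -/
lemma count_taller [NeZero n] (ℓ : ZMod n → ℝ) (k : ℕ) (i : ZMod n) :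
    (univ.filter fun j => (CylGraph k ℓ).Adj i j ∧ ℓ i < ℓ j).card
      = min (univ.filter fun t => ℓ i < ℓ t).card (2 * k + 2) := by
  classical
  set T : Finset (ZMod n) := univ.filter fun t => ℓ i < ℓ t with hT
  set g : ZMod n → ℕ := fun t => (t - i).val with hg
  have hginj : Function.Injective g := by
    intro a b h
    have h2 : a - i = b - i := ZMod.val_injective n h
    exact sub_left_injective h2
  set S : Finset ℕ := T.image g with hS
  have hne_of_lt : ∀ t : ZMod n, ℓ i < ℓ t → t ≠ i := by
    intro t ht h; subst h; exact lt_irrefl _ ht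
  have hg0 : ∀ t : ZMod n, t ≠ i → 0 < g t := fun t ht => sub_ne_zero_val ht
  have hA : ∀ j, ℓ i < ℓ j → exceedCount ℓ i j = (S.filter (· < g j)).card := by
    intro j hj
    have hmin : min (ℓ i) (ℓ j) = ℓ i := min_eq_left hj.le
    have hset : (Arc i j).filter (fun t => min (ℓ i) (ℓ j) < ℓ t)
        = T.filter fun t => g t < g j := by
      ext t
      simp only [Arc, hT, filter_filter, mem_filter, mem_univ, true_and, hmin]
      constructor
      · rintro ⟨⟨h1, h2⟩, h3⟩; exact ⟨h3, h2⟩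
      · rintro ⟨h3, h2⟩; exact ⟨⟨hg0 t (hne_of_lt t h3), h2⟩, h3⟩
    rw [exceedCount, hset, hS, Finset.filter_image,
      Finset.card_image_of_injOn hginj.injOn]
  have hB : ∀ j, ℓ i < ℓ j → exceedCount ℓ j i = (S.filter (g j < ·)).card := by
    intro j hj
    have hij : i ≠ j := fun h => hne_of_lt j hj h.symm
    have hmin : min (ℓ j) (ℓ i) = ℓ i := min_eq_right hj.le
    have hset : (Arc j i).filter (fun t => min (ℓ j) (ℓ i) < ℓ t)
        = T.filter fun t => g j < g t := by
      ext t
      simp only [hT, mem_filter, mem_univ, true_and, hmin]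
      constructor
      · rintro ⟨h1, h3⟩
        exact ⟨h3, (mem_arc_compl hij (hne_of_lt t h3)).1 h1⟩
      · rintro ⟨h3, h2⟩
        exact ⟨(mem_arc_compl hij (hne_of_lt t h3)).2 h2, h3⟩
    rw [exceedCount, hset, hS, Finset.filter_image,
      Finset.card_image_of_injOn hginj.injOn]
  have hNset : (univ.filter fun j => (CylGraph k ℓ).Adj i j ∧ ℓ i < ℓ j)
      = T.filter fun j => (S.filter (· < g j)).card ≤ k ∨ (S.filter (g j < ·)).card ≤ k := by
    ext j
    simp only [mem_filter, mem_univ, true_and, hT, cylGraph_adj]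
    constructor
    · rintro ⟨⟨hne, hor⟩, hj⟩
      refine ⟨hj, ?_⟩
      rcases hor with h | h
      · exact Or.inl (by rw [← hA j hj]; exact h)
      · exact Or.inr (by rw [← hB j hj]; exact h)
    · rintro ⟨hj, hor⟩
      refine ⟨⟨fun h => hne_of_lt j hj h.symm, ?_⟩, hj⟩
      rcases hor with h | h
      · exact Or.inl (by rw [hA j hj]; exact h)
      · exact Or.inr (by rw [hB j hj]; exact h)
  rw [hNset]
  have hstep : (T.filter fun j => (S.filter (· < g j)).card ≤ k
        ∨ (S.filter (g j < ·)).card ≤ k).card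
      = (S.filter fun s => (S.filter (· < s)).card ≤ k ∨ (S.filter (s < ·)).card ≤ k).card := by
    rw [hS, Finset.filter_image, Finset.card_image_of_injOn hginj.injOn]
  rw [hstep, key_count, hS, Finset.card_image_of_injOn hginj.injOn]

/-- The map sending each vertex to the number of taller vertices is a bijection onto `range n`. -/
lemma taller_image [NeZero n] (ℓ : ZMod n → ℝ) (hinj : Function.Injective ℓ) :
    (univ : Finset (ZMod n)).image (fun i => (univ.filter fun t => ℓ i < ℓ t).card)
      = range n := by
  classical
  set F : ZMod n → ℕ := fun i => (univ.filter fun t => ℓ i < ℓ t).card with hF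
  have hmono : ∀ i i' : ZMod n, ℓ i < ℓ i' → F i' < F i := by
    intro i i' h
    apply Finset.card_lt_card
    refine ⟨?_, fun hsub => ?_⟩
    · intro x hx
      simp only [mem_filter, mem_univ, true_and] at hx ⊢
      exact lt_trans h hx
    · have h1 : i' ∈ univ.filter fun t => ℓ i < ℓ t := by
        simp only [mem_filter, mem_univ, true_and]; exact h
      have h2 := mem_filter.1 (hsub h1)
      exact lt_irrefl _ h2.2
  have hFinj : Function.Injective F := by
    intro i i' h
    by_contra hne
    rcases Ne.lt_or_gt (hinj.ne_iff.2 hne) with hlt | hlt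
    · exact absurd h.symm (Nat.ne_of_lt (hmono i i' hlt))
    · exact absurd h (Nat.ne_of_lt (hmono i' i hlt))
  have hFlt : ∀ i, F i < n := by
    intro i
    have : (univ.filter fun t => ℓ i < ℓ t).card < (univ : Finset (ZMod n)).card := by
      apply Finset.card_lt_card
      refine ⟨Finset.filter_subset _ _, fun hsub => ?_⟩
      have h2 := mem_filter.1 (hsub (mem_univ i))
      exact lt_irrefl _ h2.2
    simpa [Finset.card_univ, ZMod.card] using this
  apply Finset.eq_of_subset_of_card_le
  · intro r hr
    obtain ⟨i, _, rfl⟩ := mem_image.1 hr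
    exact mem_range.2 (hFlt i)
  · rw [card_range, Finset.card_image_of_injective _ hFinj, Finset.card_univ, ZMod.card]

/-- Edge count as a sum over `range n`. -/
lemma edge_card_eq_sum [NeZero n] (ℓ : ZMod n → ℝ) (hinj : Function.Injective ℓ) (k : ℕ) :
    (CylGraph k ℓ).edgeFinset.card = ∑ r ∈ range n, min r (2 * k + 2) := by
  classical
  set G := CylGraph k ℓ with hG
  set P : Finset (ZMod n × ZMod n) :=
    univ.filter (fun p => G.Adj p.1 p.2 ∧ ℓ p.1 < ℓ p.2) with hP
  -- edges ↔ ordered pairs with shorter first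
  have hPcard : P.card = G.edgeFinset.card := by
    apply Finset.card_bij (s := P) (t := G.edgeFinset) (fun p _ => Sym2.mk p.1 p.2)
    · rintro ⟨a, b⟩ hp
      have h := (mem_filter.1 hp).2
      exact SimpleGraph.mem_edgeFinset.2 ((G.mem_edgeSet).2 h.1)
    · rintro ⟨a, b⟩ ha ⟨c, d⟩ hc h
      have ha' := (mem_filter.1 ha).2
      have hc' := (mem_filter.1 hc).2
      have h' : s(a, b) = s(c, d) := h
      rcases Sym2.eq_iff.1 h' with ⟨rfl, rfl⟩ | ⟨rfl, rfl⟩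
      · rfl
      · exact absurd hc'.2 (lt_asymm ha'.2)
    · intro e he
      obtain ⟨⟨a, b⟩, rfl⟩ := Quot.exists_rep e
      have hadj : G.Adj a b := (G.mem_edgeSet).1 (SimpleGraph.mem_edgeFinset.1 he)
      have hne : ℓ a ≠ ℓ b := hinj.ne_iff.2 hadj.ne
      rcases Ne.lt_or_gt hne with h | h
      · exact ⟨(a, b), mem_filter.2 ⟨mem_univ _, hadj, h⟩, rfl⟩
      · exact ⟨(b, a), mem_filter.2 ⟨mem_univ _, hadj.symm, h⟩, Sym2.eq_swap⟩
  -- fiberwise count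
  have hfib : P.card = ∑ i : ZMod n, (univ.filter fun j => G.Adj i j ∧ ℓ i < ℓ j).card := by
    rw [Finset.card_eq_sum_card_fiberwise (f := Prod.fst) (t := univ) (fun p _ => mem_univ _)]
    apply Finset.sum_congr rfl
    intro i _
    apply Finset.card_bij (fun p _ => p.2)
    · rintro ⟨a, b⟩ hp
      simp only [mem_filter, mem_univ, true_and] at hp ⊢
      obtain ⟨h1, h3⟩ := hp
      subst h3
      exact (mem_filter.1 h1).2
    · rintro ⟨a, b⟩ ha ⟨c, d⟩ hc h
      simp only [mem_filter] at ha hc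
      have h1 : a = i := ha.2
      have h2 : c = i := hc.2
      subst h1; subst h2
      exact Prod.ext rfl h
    · intro j hj
      simp only [mem_filter, mem_univ, true_and] at hj
      exact ⟨(i, j), mem_filter.2 ⟨mem_filter.2 ⟨mem_univ _, hj⟩, rfl⟩, rfl⟩
  rw [← hPcard, hfib]
  have hterm : ∀ i : ZMod n, (univ.filter fun j => G.Adj i j ∧ ℓ i < ℓ j).card
      = min (univ.filter fun t => ℓ i < ℓ t).card (2 * k + 2) := fun i => count_taller ℓ k i
  rw [Finset.sum_congr rfl (fun i _ => hterm i)]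
  rw [← taller_image ℓ hinj,
    Finset.sum_image (fun x _ y _ h => by
      by_contra hne
      have hFinj : ∀ a b : ZMod n, ℓ a < ℓ b →
          (univ.filter fun t => ℓ b < ℓ t).card < (univ.filter fun t => ℓ a < ℓ t).card := by
        intro a b hab
        apply Finset.card_lt_card
        refine ⟨?_, fun hsub => ?_⟩
        · intro t ht
          simp only [mem_filter, mem_univ, true_and] at ht ⊢
          exact lt_trans hab ht
        · have h1 : b ∈ univ.filter fun t => ℓ a < ℓ t := by
            simp only [mem_filter, mem_univ, true_and]; exact hab
          have h2 := mem_filter.1 (hsub h1)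
          exact lt_irrefl _ h2.2
      rcases Ne.lt_or_gt (hinj.ne_iff.2 hne) with hlt | hlt
      · exact absurd h.symm (Nat.ne_of_lt (hFinj x y hlt))
      · exact absurd h (Nat.ne_of_lt (hFinj y x hlt)))]

/-- The sum formula. -/
lemma sum_min_formula (k : ℕ) : ∀ m : ℕ, 2 * k + 2 ≤ m →
    ∑ r ∈ range m, min r (2 * k + 2) = (k + 1) * (2 * m - (2 * k + 3)) := by
  intro m hm
  induction m, hm using Nat.le_induction with
  | base =>
    have h1 : ∀ r ∈ range (2 * k + 2), min r (2 * k + 2) = r := by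
      intro r hr
      exact min_eq_left (le_of_lt (mem_range.1 hr))
    rw [Finset.sum_congr rfl h1]
    have h2 : 2 * (2 * k + 2) - (2 * k + 3) = 2 * k + 1 := by omega
    rw [h2]
    apply Nat.eq_of_mul_eq_mul_right (show 0 < 2 by norm_num)
    rw [Finset.sum_range_id_mul_two, show 2 * k + 2 - 1 = 2 * k + 1 from by omega]
    ring
  | succ m hm ih =>
    rw [Finset.sum_range_succ, ih, min_eq_right (by omega)]
    have h1 : 2 * (m + 1) - (2 * k + 3) = (2 * m - (2 * k + 3)) + 2 := by omega
    rw [h1, Nat.mul_add]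
    have h2 : (k + 1) * 2 = 2 * k + 2 := by ring
    rw [h2]

/-- edge count of a cylindrical semi-bar `k`-visibility graph with distinct
lengths: `(k+1)(2n-2k-3)` when `n ≥ 2k+2`, and complete with `n(n-1)/2` edges when
`n ≤ 2k+2`. -/
theorem stmt1 (k : ℕ) [NeZero n] (ℓ : ZMod n → ℝ) (hinj : Function.Injective ℓ) :
    (2 * k + 2 ≤ n → (CylGraph k ℓ).edgeFinset.card = (k + 1) * (2 * n - (2 * k + 3))) ∧
    (n ≤ 2 * k + 2 → CylGraph k ℓ = ⊤ ∧ (CylGraph k ℓ).edgeFinset.card = n * (n - 1) / 2) := by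
  constructor
  · intro hn
    rw [edge_card_eq_sum ℓ hinj k, sum_min_formula k n hn]
  · intro hn
    have htop : CylGraph k ℓ = ⊤ := by
      ext i j
      simp only [SimpleGraph.top_adj, cylGraph_adj]
      constructor
      · exact fun h => h.1
      · intro hij
        refine ⟨hij, ?_⟩
        have hb1 : exceedCount ℓ i j ≤ (j - i).val - 1 := by
          refine le_trans (Finset.card_le_card (Finset.filter_subset _ _)) ?_
          have := Finset.card_le_card_of_injOn (fun t => (t - i).val)
            (s := Arc i j) (t := Finset.Ioo 0 ((j - i).val)) ?_ ?_
          · simpa [Nat.card_Ioo] using this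
          · intro t ht
            have := mem_filter.1 ht
            exact Finset.mem_Ioo.2 this.2
          · intro a _ b _ h
            exact sub_left_injective (ZMod.val_injective n h)
        have hb2 : exceedCount ℓ j i ≤ (i - j).val - 1 := by
          refine le_trans (Finset.card_le_card (Finset.filter_subset _ _)) ?_
          have := Finset.card_le_card_of_injOn (fun t => (t - j).val)
            (s := Arc j i) (t := Finset.Ioo 0 ((i - j).val)) ?_ ?_
          · simpa [Nat.card_Ioo] using this
          · intro t ht
            have := mem_filter.1 ht
            exact Finset.mem_Ioo.2 this.2
          · intro a _ b _ h
            exact sub_left_injective (ZMod.val_injective n h)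
        have hij' : (i - j).val = n - (j - i).val := by
          have heq : i - j = -(j - i) := by ring
          rw [heq, ZMod.neg_val, if_neg (sub_ne_zero.2 (Ne.symm hij))]
        have h1 : 0 < (j - i).val := sub_ne_zero_val (fun h => hij h.symm)
        have h2 : (j - i).val < n := ZMod.val_lt _
        omega
    refine ⟨htop, ?_⟩
    have hEF : (CylGraph k ℓ).edgeFinset = (⊤ : SimpleGraph (ZMod n)).edgeFinset := by
      ext e
      simp only [SimpleGraph.mem_edgeFinset, htop]
    rw [hEF, SimpleGraph.card_edgeFinset_top_eq_card_choose_two, ZMod.card,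
      Nat.choose_two_right]
end

section
/- Every cylindrical semi-bar k-visibility graph (with injective lengths) is (2k+2)-degenerate: every nonempty subset S of vertices contains a vertex whose number of neighbors within S is at most 2k+2. -/
open Finset
open scoped Classical

variable {n : ℕ}

lemma val_pos_of_ne {m : ℕ} [NeZero m] {a b : ZMod m} (h : a ≠ b) : 0 < (a - b).val := by
  have : a - b ≠ 0 := sub_ne_zero.mpr h
  have := (ZMod.val_eq_zero (a - b)).not.mpr this
  omega

lemma auxA (k : ℕ) [NeZero n] (ℓ : ZMod n → ℝ) (i : ZMod n) (A : Finset (ZMod n))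
    (h : ∀ j ∈ A, j ≠ i ∧ ℓ i < ℓ j ∧ exceedCount ℓ i j ≤ k) : A.card ≤ k + 1 := by
  by_contra hc
  push_neg at hc
  have hne : A.Nonempty := Finset.card_pos.mp (by omega)
  obtain ⟨j, hjA, hmax⟩ := A.exists_max_image (fun t => (t - i).val) hne
  obtain ⟨hji, hℓ, hcount⟩ := h j hjA
  have hsub : A.erase j ⊆ (Arc i j).filter fun t => min (ℓ i) (ℓ j) < ℓ t := by
    intro j' hj'
    have hj'j : j' ≠ j := Finset.ne_of_mem_erase hj'
    have hj'A : j' ∈ A := Finset.mem_of_mem_erase hj'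
    obtain ⟨hj'i, hℓ', _⟩ := h j' hj'A
    simp only [Arc, Finset.mem_filter, Finset.mem_univ, true_and]
    refine ⟨⟨val_pos_of_ne hj'i, ?_⟩, ?_⟩
    · have hle := hmax j' hj'A
      rcases lt_or_eq_of_le hle with h1 | h1
      · exact h1
      · exact absurd (sub_left_injective (ZMod.val_injective n h1)) hj'j
    · rw [min_eq_left hℓ.le]; exact hℓ'
  have hcard : (A.erase j).card ≤ exceedCount ℓ i j := Finset.card_le_card hsub
  rw [Finset.card_erase_of_mem hjA] at hcard
  omega

lemma auxB (k : ℕ) [NeZero n] (ℓ : ZMod n → ℝ) (i : ZMod n) (A : Finset (ZMod n))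
    (h : ∀ j ∈ A, j ≠ i ∧ ℓ i < ℓ j ∧ exceedCount ℓ j i ≤ k) : A.card ≤ k + 1 := by
  by_contra hc
  push_neg at hc
  have hne : A.Nonempty := Finset.card_pos.mp (by omega)
  obtain ⟨j, hjA, hmax⟩ := A.exists_max_image (fun t => (i - t).val) hne
  obtain ⟨hji, hℓ, hcount⟩ := h j hjA
  have hsub : A.erase j ⊆ (Arc j i).filter fun t => min (ℓ j) (ℓ i) < ℓ t := by
    intro j' hj'
    have hj'j : j' ≠ j := Finset.ne_of_mem_erase hj'
    have hj'A : j' ∈ A := Finset.mem_of_mem_erase hj'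
    obtain ⟨hj'i, hℓ', _⟩ := h j' hj'A
    set a := (i - j).val with ha
    set b := (i - j').val with hb
    have hbpos : 0 < b := val_pos_of_ne hj'i.symm
    have hba : b < a := by
      rcases lt_or_eq_of_le (hmax j' hj'A) with h1 | h1
      · exact h1
      · exact absurd (sub_right_injective (ZMod.val_injective n h1)) hj'j
    have hane : a < n := ZMod.val_lt _
    have hcast : j' - j = ((a - b : ℕ) : ZMod n) := by
      rw [Nat.cast_sub hba.le, ha, hb, ZMod.natCast_val, ZMod.natCast_val,
        ZMod.cast_id, ZMod.cast_id]
      ring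
    have hval : (j' - j).val = a - b := by
      rw [hcast, ZMod.val_cast_of_lt (by omega)]
    simp only [Arc, Finset.mem_filter, Finset.mem_univ, true_and]
    refine ⟨⟨?_, ?_⟩, ?_⟩
    · omega
    · rw [hval]; omega
    · rw [min_eq_right hℓ.le]; exact hℓ'
  have hcard : (A.erase j).card ≤ exceedCount ℓ j i := Finset.card_le_card hsub
  rw [Finset.card_erase_of_mem hjA] at hcard
  omega

/-- cylindrical semi-bar `k`-visibility graphs with distinct lengths are
`(2k+2)`-degenerate: every nonempty set of vertices contains a vertex with at most `2k+2`
neighbors inside the set. -/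
theorem stmt3 (k : ℕ) [NeZero n] (ℓ : ZMod n → ℝ) (hinj : Function.Injective ℓ) :
    ∀ S : Finset (ZMod n), S.Nonempty →
      ∃ i ∈ S, (S.filter fun j => (CylGraph k ℓ).Adj i j).card ≤ 2 * k + 2 := by
  intro S hS
  obtain ⟨i, hiS, hmin⟩ := S.exists_min_image ℓ hS
  refine ⟨i, hiS, ?_⟩
  set N := S.filter fun j => (CylGraph k ℓ).Adj i j with hN
  have hprop : ∀ j ∈ N, j ≠ i ∧ ℓ i < ℓ j ∧
      (exceedCount ℓ i j ≤ k ∨ exceedCount ℓ j i ≤ k) := by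
    intro j hj
    rw [hN, Finset.mem_filter] at hj
    obtain ⟨hjS, hne, hadj⟩ := hj
    have hji : j ≠ i := hne.symm
    refine ⟨hji, ?_, hadj⟩
    exact lt_of_le_of_ne (hmin j hjS) (fun e => hji (hinj e.symm))
  have hNsub : N ⊆ (N.filter fun j => exceedCount ℓ i j ≤ k) ∪
      (N.filter fun j => exceedCount ℓ j i ≤ k) := by
    intro j hj
    rcases (hprop j hj).2.2 with h1 | h1
    · exact Finset.mem_union_left _ (Finset.mem_filter.mpr ⟨hj, h1⟩)
    · exact Finset.mem_union_right _ (Finset.mem_filter.mpr ⟨hj, h1⟩)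
  have hA : (N.filter fun j => exceedCount ℓ i j ≤ k).card ≤ k + 1 := by
    apply auxA k ℓ i
    intro j hj
    rw [Finset.mem_filter] at hj
    exact ⟨(hprop j hj.1).1, (hprop j hj.1).2.1, hj.2⟩
  have hB : (N.filter fun j => exceedCount ℓ j i ≤ k).card ≤ k + 1 := by
    apply auxB k ℓ i
    intro j hj
    rw [Finset.mem_filter] at hj
    exact ⟨(hprop j hj.1).1, (hprop j hj.1).2.1, hj.2⟩
  calc N.card ≤ _ := Finset.card_le_card hNsub
    _ ≤ _ := Finset.card_union_le _ _
    _ ≤ 2 * k + 2 := by omega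
end

section
/- Every cylindrical semi-bar k-visibility graph with injective lengths has chromatic number at most 2k+3. -/
open Finset
open scoped Classical

variable {n : ℕ}

/-! ### Auxiliary lemmas -/

/-- Reversing the arc: for `t ≠ v`, `u ≠ v`, membership in the arc from `u` to `v` corresponds to
the relative position of `t` being beyond that of `u`. -/
lemma arc_rev [NeZero n] {v u t : ZMod n} (hu : u ≠ v) (ht : t ≠ v) :
    (0 < (t - u).val ∧ (t - u).val < (v - u).val) ↔ (u - v).val < (t - v).val := by
  set a := (t - v).val with ha
  set b := (u - v).val with hb
  have ha1 : 0 < a := by rw [ha, Nat.pos_iff_ne_zero, Ne, ZMod.val_eq_zero, sub_eq_zero]; exact ht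
  have hb1 : 0 < b := by rw [hb, Nat.pos_iff_ne_zero, Ne, ZMod.val_eq_zero, sub_eq_zero]; exact hu
  have han : a < n := ZMod.val_lt _
  have hbn : b < n := ZMod.val_lt _
  have huv0 : u - v ≠ 0 := sub_ne_zero_of_ne hu
  have hvu : (v - u).val = n - b := by
    have h : v - u = -(u - v) := by ring
    rw [h, ZMod.neg_val, if_neg huv0]
  have htu : t - u = (t - v) - (u - v) := by ring
  rcases lt_trichotomy a b with hab | hab | hab
  · have h1 : (u - v) - (t - v) ≠ 0 := by
      intro h0
      rw [sub_eq_zero] at h0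
      exact absurd (congrArg ZMod.val h0) (by omega)
    have h2 : ((u - v) - (t - v)).val = b - a := ZMod.val_sub (le_of_lt hab)
    have h3 : (t - u).val = n - (b - a) := by
      have h : t - u = -((u - v) - (t - v)) := by ring
      rw [h, ZMod.neg_val, if_neg h1, h2]
    constructor
    · rintro ⟨h4, h5⟩; omega
    · omega
  · have htu' : t = u := by
      have h := ZMod.val_injective n hab
      rwa [sub_left_inj] at h
    rw [htu', sub_self]
    simp [hab]
  · have h2 : (t - u).val = a - b := by rw [htu]; exact ZMod.val_sub (le_of_lt hab)
    rw [h2, hvu]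
    omega

/-- At most `k+1` elements of a finite set of naturals have at most `k` elements below them. -/
lemma count_low (S : Finset ℕ) (k : ℕ) :
    (S.filter fun s => (S.filter (· < s)).card ≤ k).card ≤ k + 1 := by
  classical
  have : (S.filter fun s => (S.filter (· < s)).card ≤ k).card ≤ (Finset.range (k + 1)).card := by
    apply Finset.card_le_card_of_injOn (fun s => (S.filter (· < s)).card)
    · intro s hs
      simp only [Finset.coe_filter, Set.mem_setOf_eq] at hs
      exact Finset.mem_range.mpr (Nat.lt_succ_of_le hs.2)
    · intro s hs t ht h
      simp only [Finset.coe_filter, Set.mem_setOf_eq] at hs ht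
      by_contra hne
      have key : ∀ x y : ℕ, x ∈ S → y ∈ S → x < y →
          (S.filter (· < x)).card < (S.filter (· < y)).card := by
        intro x y hx hy hxy
        apply Finset.card_lt_card
        rw [Finset.ssubset_def]
        constructor
        · intro z hz
          rw [Finset.mem_filter] at hz ⊢
          exact ⟨hz.1, lt_trans hz.2 hxy⟩
        · intro hsub
          have : x ∈ S.filter (· < y) := Finset.mem_filter.mpr ⟨hx, hxy⟩
          have := hsub this
          rw [Finset.mem_filter] at this
          exact lt_irrefl x this.2
      rcases lt_or_gt_of_ne hne with hlt | hlt
      · exact absurd h (Nat.ne_of_lt (key s t hs.1 ht.1 hlt))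
      · exact absurd h.symm (Nat.ne_of_lt (key t s ht.1 hs.1 hlt))
  simpa using this

/-- At most `k+1` elements of a finite set of naturals have at most `k` elements above them. -/
lemma count_high (S : Finset ℕ) (k : ℕ) :
    (S.filter fun s => (S.filter (s < ·)).card ≤ k).card ≤ k + 1 := by
  classical
  have : (S.filter fun s => (S.filter (s < ·)).card ≤ k).card ≤ (Finset.range (k + 1)).card := by
    apply Finset.card_le_card_of_injOn (fun s => (S.filter (s < ·)).card)
    · intro s hs
      simp only [Finset.coe_filter, Set.mem_setOf_eq] at hs
      exact Finset.mem_range.mpr (Nat.lt_succ_of_le hs.2)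
    · intro s hs t ht h
      simp only [Finset.coe_filter, Set.mem_setOf_eq] at hs ht
      by_contra hne
      have key : ∀ x y : ℕ, x ∈ S → y ∈ S → x < y →
          (S.filter (y < ·)).card < (S.filter (x < ·)).card := by
        intro x y hx hy hxy
        apply Finset.card_lt_card
        rw [Finset.ssubset_def]
        constructor
        · intro z hz
          rw [Finset.mem_filter] at hz ⊢
          exact ⟨hz.1, lt_trans hxy hz.2⟩
        · intro hsub
          have : y ∈ S.filter (x < ·) := Finset.mem_filter.mpr ⟨hy, hxy⟩
          have := hsub this
          rw [Finset.mem_filter] at this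
          exact lt_irrefl y this.2
      rcases lt_or_gt_of_ne hne with hlt | hlt
      · exact absurd h.symm (Nat.ne_of_lt (key s t hs.1 ht.1 hlt))
      · exact absurd h (Nat.ne_of_lt (key t s ht.1 hs.1 hlt))
  simpa using this

/-- The taller neighbours of `v`. -/
noncomputable def tallerNbrs (k : ℕ) [NeZero n] (ℓ : ZMod n → ℝ) (v : ZMod n) :
    Finset (ZMod n) :=
  univ.filter fun u => (CylGraph k ℓ).Adj v u ∧ ℓ v < ℓ u

lemma card_tallerNbrs_le (k : ℕ) [NeZero n] (ℓ : ZMod n → ℝ) (v : ZMod n) :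
    (tallerNbrs k ℓ v).card ≤ 2 * k + 2 := by
  classical
  set T : Finset (ZMod n) := univ.filter fun t => ℓ v < ℓ t with hT
  set p : ZMod n → ℕ := fun t => (t - v).val with hp
  have hpinj : Function.Injective p := by
    intro x y h
    have := ZMod.val_injective n h
    rwa [sub_left_inj] at this
  set S : Finset ℕ := T.image p with hS
  -- rewrite the exceed counts
  have hposC : ∀ t : ZMod n, t ≠ v → 0 < p t := fun t ht => by
    rw [hp, Nat.pos_iff_ne_zero, Ne, ZMod.val_eq_zero, sub_eq_zero]; exact ht
  have hEC1 : ∀ u ∈ tallerNbrs k ℓ v, exceedCount ℓ v u = (S.filter (· < p u)).card := by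
    intro u hu
    rw [tallerNbrs, Finset.mem_filter] at hu
    obtain ⟨-, hadj, hlt⟩ := hu
    have hmin : min (ℓ v) (ℓ u) = ℓ v := min_eq_left (le_of_lt hlt)
    rw [exceedCount, hmin]
    have heq : (Arc v u).filter (fun t => ℓ v < ℓ t) = T.filter fun t => p t < p u := by
      ext t
      simp only [Arc, hT, Finset.mem_filter, Finset.mem_univ, true_and]
      constructor
      · rintro ⟨⟨h1, h2⟩, h3⟩; exact ⟨h3, h2⟩
      · rintro ⟨h1, h2⟩
        have htv : t ≠ v := fun h => by rw [h] at h1; exact lt_irrefl _ h1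
        exact ⟨⟨hposC t htv, h2⟩, h1⟩
    rw [heq, hS, Finset.filter_image,
      Finset.card_image_of_injOn (Function.Injective.injOn hpinj)]
  have hEC2 : ∀ u ∈ tallerNbrs k ℓ v, exceedCount ℓ u v = (S.filter (p u < ·)).card := by
    intro u hu
    rw [tallerNbrs, Finset.mem_filter] at hu
    obtain ⟨-, hadj, hlt⟩ := hu
    have huv : u ≠ v := fun h => by rw [h] at hlt; exact lt_irrefl _ hlt
    have hmin : min (ℓ u) (ℓ v) = ℓ v := min_eq_right (le_of_lt hlt)
    rw [exceedCount, hmin]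
    have heq : (Arc u v).filter (fun t => ℓ v < ℓ t) = T.filter fun t => p u < p t := by
      ext t
      simp only [Arc, hT, Finset.mem_filter, Finset.mem_univ, true_and]
      constructor
      · rintro ⟨⟨h1, h2⟩, h3⟩
        have htv : t ≠ v := by
          intro h; rw [h] at h2; exact absurd h2 (lt_irrefl _)
        exact ⟨h3, (arc_rev huv htv).mp ⟨h1, h2⟩⟩
      · rintro ⟨h1, h2⟩
        have htv : t ≠ v := fun h => by rw [h] at h1; exact lt_irrefl _ h1
        exact ⟨(arc_rev huv htv).mpr h2, h1⟩
    rw [heq, hS, Finset.filter_image,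
      Finset.card_image_of_injOn (Function.Injective.injOn hpinj)]
  -- the image of tallerNbrs lands in the union of the two special subsets of S
  have hsub : (tallerNbrs k ℓ v).image p ⊆
      (S.filter fun s => (S.filter (· < s)).card ≤ k) ∪
      (S.filter fun s => (S.filter (s < ·)).card ≤ k) := by
    intro s hs
    rw [Finset.mem_image] at hs
    obtain ⟨u, hu, rfl⟩ := hs
    have hu' := hu
    rw [tallerNbrs, Finset.mem_filter] at hu'
    obtain ⟨-, hadj, hlt⟩ := hu'
    have hmemS : p u ∈ S := by
      rw [hS]
      exact Finset.mem_image_of_mem p (Finset.mem_filter.mpr ⟨Finset.mem_univ _, hlt⟩)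
    rcases hadj.2 with hle | hle
    · exact Finset.mem_union_left _ (Finset.mem_filter.mpr ⟨hmemS, by rw [← hEC1 u hu]; exact hle⟩)
    · exact Finset.mem_union_right _ (Finset.mem_filter.mpr ⟨hmemS, by rw [← hEC2 u hu]; exact hle⟩)
  calc (tallerNbrs k ℓ v).card = ((tallerNbrs k ℓ v).image p).card :=
        (Finset.card_image_of_injOn (Function.Injective.injOn hpinj)).symm
    _ ≤ _ := Finset.card_le_card hsub
    _ ≤ (S.filter fun s => (S.filter (· < s)).card ≤ k).card +
        (S.filter fun s => (S.filter (s < ·)).card ≤ k).card := Finset.card_union_le _ _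
    _ ≤ (k + 1) + (k + 1) := Nat.add_le_add (count_low S k) (count_high S k)
    _ = 2 * k + 2 := by ring

lemma exists_free {m : ℕ} (s : Finset (Fin (m + 1))) (h : s.card < m + 1) :
    ∃ c, c ∉ s := by
  by_contra hc
  push_neg at hc
  have : s = Finset.univ := Finset.eq_univ_iff_forall.mpr hc
  rw [this, Finset.card_univ, Fintype.card_fin] at h
  omega

lemma measure_lt (k : ℕ) [NeZero n] (ℓ : ZMod n → ℝ) {v u : ZMod n}
    (hu : u ∈ tallerNbrs k ℓ v) :
    ((univ : Finset (ZMod n)).filter fun w => ℓ u < ℓ w).card <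
    ((univ : Finset (ZMod n)).filter fun w => ℓ v < ℓ w).card := by
  simp only [tallerNbrs, Finset.mem_filter] at hu
  apply Finset.card_lt_card
  rw [Finset.ssubset_def]
  refine ⟨fun w hw => ?_, fun hsub => ?_⟩
  · rw [Finset.mem_filter] at hw ⊢
    exact ⟨hw.1, lt_trans hu.2.2 hw.2⟩
  · have h1 : u ∈ (univ : Finset (ZMod n)).filter fun w => ℓ v < ℓ w :=
      Finset.mem_filter.mpr ⟨Finset.mem_univ _, hu.2.2⟩
    have h2 := hsub h1
    rw [Finset.mem_filter] at h2
    exact lt_irrefl _ h2.2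

lemma greedy_aux (k : ℕ) [NeZero n] (ℓ : ZMod n → ℝ) (v : ZMod n)
    (c : {x // x ∈ tallerNbrs k ℓ v} → Fin (2 * k + 3)) :
    ∃ col : Fin (2 * k + 3), col ∉ (tallerNbrs k ℓ v).attach.image c := by
  have h1 : ((tallerNbrs k ℓ v).attach.image c).card ≤ 2 * k + 2 :=
    le_trans Finset.card_image_le
      (by rw [Finset.card_attach]; exact card_tallerNbrs_le k ℓ v)
  exact exists_free (m := 2 * k + 2) _ (by omega)

/-- Greedy colouring by decreasing bar length. -/
noncomputable def greedy (k : ℕ) [NeZero n] (ℓ : ZMod n → ℝ) (v : ZMod n) : Fin (2 * k + 3) :=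
  Classical.choose (greedy_aux k ℓ v (fun u => greedy k ℓ u.1))
termination_by ((univ : Finset (ZMod n)).filter fun u => ℓ v < ℓ u).card
decreasing_by all_goals exact measure_lt k ℓ u.2

lemma greedy_not_mem (k : ℕ) [NeZero n] (ℓ : ZMod n → ℝ) (v : ZMod n) :
    greedy k ℓ v ∉ (tallerNbrs k ℓ v).attach.image (fun u => greedy k ℓ u.1) := by
  rw [greedy]
  exact Classical.choose_spec (greedy_aux k ℓ v _)

lemma greedy_ne (k : ℕ) [NeZero n] (ℓ : ZMod n → ℝ) {v u : ZMod n}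
    (hu : u ∈ tallerNbrs k ℓ v) : greedy k ℓ v ≠ greedy k ℓ u := by
  intro heq
  apply greedy_not_mem k ℓ v
  rw [Finset.mem_image]
  exact ⟨⟨u, hu⟩, Finset.mem_attach _ _, heq.symm⟩

/-- cylindrical semi-bar `k`-visibility graphs with distinct lengths have
chromatic number at most `2k+3`. -/
theorem stmt4 (k : ℕ) [NeZero n] (ℓ : ZMod n → ℝ) (hinj : Function.Injective ℓ) :
    (CylGraph k ℓ).chromaticNumber ≤ ((2 * k + 3 : ℕ) : ℕ∞) := by
  have hcol : (CylGraph k ℓ).Colorable (2 * k + 3) := by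
    refine ⟨SimpleGraph.Coloring.mk (greedy k ℓ) ?_⟩
    intro v u hadj heq
    have hne : v ≠ u := hadj.1
    have hℓne : ℓ v ≠ ℓ u := fun h => hne (hinj h)
    rcases lt_or_gt_of_ne hℓne with hlt | hlt
    · exact greedy_ne k ℓ (Finset.mem_filter.mpr ⟨Finset.mem_univ _, hadj, hlt⟩) heq
    · exact greedy_ne k ℓ (v := u) (u := v)
        (Finset.mem_filter.mpr ⟨Finset.mem_univ _, hadj.symm, hlt⟩) heq.symm
  exact hcol.chromaticNumber_le
end

section
/- The complete graph K_{2k+3} is a cylindrical semi-bar k-visibility graph: if n = 2k+3 and ℓ : ZMod n → ℝ is injective, then every pair of distinct vertices is adjacent in the cylindrical semi-bar k-visibility graph. -/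
open Finset
open scoped Classical

variable {n : ℕ}

lemma memArc_rev [NeZero n] {i j : ZMod n} (hij : i ≠ j) (t : ZMod n) :
    t ∈ Arc j i ↔ (j - i).val < (t - i).val := by
  have hd0 : (j - i) ≠ 0 := sub_ne_zero.mpr (Ne.symm hij)
  have hdval : (j - i).val ≠ 0 := fun h => hd0 (ZMod.val_eq_zero _ |>.mp h)
  have hneg : (i - j).val = n - (j - i).val := by
    have : i - j = -(j - i) := by ring
    rw [this]
    exact @ZMod.val_neg_of_ne_zero _ _ _ ⟨hd0⟩
  have htj : t - j = (t - i) + (i - j) := by ring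
  have hval : (t - j).val = ((t - i).val + (n - (j - i).val)) % n := by
    rw [htj, ZMod.val_add, hneg]
  set a := (t - i).val with ha
  set d := (j - i).val with hd
  have han : a < n := ZMod.val_lt _
  have hdn : d < n := ZMod.val_lt _
  simp only [Arc, mem_filter, mem_univ, true_and, hval]
  constructor
  · rintro ⟨h1, h2⟩
    rcases le_or_gt d a with h | h
    · rcases lt_or_eq_of_le h with h | h
      · exact h
      · exfalso
        have : (a + (n - d)) % n = 0 := by
          rw [← h]
          have hh : d + (n - d) = n := by omega
          rw [hh, Nat.mod_self]
        omega
    · have : (a + (n - d)) % n = a + (n - d) := Nat.mod_eq_of_lt (by omega)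
      omega
  · intro h
    have heq : a + (n - d) = (a - d) + n := by omega
    have : (a + (n - d)) % n = a - d := by
      rw [heq, Nat.add_mod_right, Nat.mod_eq_of_lt (by omega)]
    omega

lemma arc_card_sum [NeZero n] {i j : ZMod n} (hij : i ≠ j) :
    (Arc i j).card + (Arc j i).card = n - 2 := by
  have hdisj : Disjoint (Arc i j) (Arc j i) := by
    rw [Finset.disjoint_left]
    intro t ht ht'
    rw [memArc_rev hij t] at ht'
    simp only [Arc, mem_filter] at ht
    omega
  have hunion : Arc i j ∪ Arc j i = univ \ {i, j} := by
    ext t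
    have h1 : (t = i) ↔ (t - i).val = 0 := by
      rw [ZMod.val_eq_zero, sub_eq_zero]
    have h2 : (t = j) ↔ (t - i).val = (j - i).val := by
      constructor
      · rintro rfl; rfl
      · intro h
        have := ZMod.val_injective n h
        have : t = j := by
          have h' : t - i = j - i := ZMod.val_injective n h
          linear_combination h'
        exact this
    have hdval : (j - i).val ≠ 0 := fun h =>
      (sub_ne_zero.mpr (Ne.symm hij)) (ZMod.val_eq_zero _ |>.mp h)
    have hdn : (j - i).val < n := ZMod.val_lt _
    have han : (t - i).val < n := ZMod.val_lt _
    rw [Finset.mem_union, memArc_rev hij t]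
    simp only [Arc, mem_filter, mem_univ, true_and,
      mem_sdiff, mem_insert, mem_singleton, h1, h2]
    omega
  have := Finset.card_union_of_disjoint hdisj
  rw [hunion] at this
  rw [← this]
  rw [Finset.card_sdiff_of_subset (by simp)]
  have : ({i, j} : Finset (ZMod n)).card = 2 := Finset.card_pair hij
  simp [this, ZMod.card]

/-- `K_{2k+3}` is a cylindrical semi-bar `k`-visibility graph: with `n = 2k+3`
bars of distinct lengths, every pair of distinct bars is adjacent. -/
theorem stmt5 (k : ℕ) [NeZero n] (hn : n = 2 * k + 3) (ℓ : ZMod n → ℝ)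
    (hinj : Function.Injective ℓ) :
    ∀ i j : ZMod n, i ≠ j → (CylGraph k ℓ).Adj i j := by
  intro i j hij
  refine ⟨hij, ?_⟩
  have hsum := arc_card_sum hij
  have h1 : exceedCount ℓ i j ≤ (Arc i j).card :=
    Finset.card_le_card (Finset.filter_subset _ _)
  have h2 : exceedCount ℓ j i ≤ (Arc j i).card :=
    Finset.card_le_card (Finset.filter_subset _ _)
  rcases le_or_gt (Arc i j).card k with h | h
  · exact Or.inl (h1.trans h)
  · exact Or.inr (h2.trans (by omega))
end

section
/- Every cylindrical semi-bar k-visibility graph is (k+2)-quasiplanar convex geometric: if G is the cylindrical semi-bar k-visibility graph determined by lengths ℓ on ZMod n, and we draw vertex i at position i on a convex n-gon with edges as chords, then there do not exist k+2 pairwise crossing chords. Combinatorially: there is no family of k+2 edges {a_1,b_1}, …, {a_{k+2}, b_{k+2}} of G that pairwise cross as chords of the cyclic order on ZMod n (two chords {a,b} and {c,d} with all four endpoints distinct cross iff exactly one of c, d lies on the cyclic open arc from a to b). -/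
open Finset
open scoped Classical

variable {n : ℕ}

/-- Two chords `{a,b}` and `{c,d}` with all four endpoints distinct cross iff exactly one of
`c, d` lies on the open cyclic arc from `a` to `b`. -/
def Crosses [NeZero n] (a b c d : ZMod n) : Prop :=
  a ≠ b ∧ c ≠ d ∧ a ≠ c ∧ a ≠ d ∧ b ≠ c ∧ b ≠ d ∧
    Xor' (c ∈ Arc a b) (d ∈ Arc a b)

/-- A convex geometric representation (edges drawn as chords of the cyclic order on `ZMod n`)
is `m`-quasiplanar if it has no `m` pairwise crossing edges. -/
def QuasiPlanar (m : ℕ) [NeZero n] (G : SimpleGraph (ZMod n)) : Prop :=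
  ¬ ∃ f g : Fin m → ZMod n, (∀ p, G.Adj (f p) (g p)) ∧
      ∀ p q, p ≠ q → Crosses (f p) (g p) (f q) (g q)

/-- Maximality: adding any absent chord creates `m` pairwise crossing edges. -/
def MaximalQP (m : ℕ) [NeZero n] (G : SimpleGraph (ZMod n)) : Prop :=
  ∀ a b : ZMod n, a ≠ b → ¬ G.Adj a b →
    ¬ QuasiPlanar m (G ⊔ SimpleGraph.fromEdgeSet {s(a, b)})

lemma natCast_val_self [NeZero n] (u : ZMod n) : ((u.val : ℕ) : ZMod n) = u := by
  rw [ZMod.natCast_val, ZMod.cast_id]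

lemma arc_cover [NeZero n] {a b t : ZMod n} (hab : a ≠ b) (hta : t ≠ a) (htb : t ≠ b) :
    t ∈ Arc a b ∨ t ∈ Arc b a := by
  have hx0 : (t - a).val ≠ 0 := by
    rw [Ne, ZMod.val_eq_zero, sub_eq_zero]; exact hta
  have hy0 : (b - a).val ≠ 0 := by
    rw [Ne, ZMod.val_eq_zero, sub_eq_zero]; exact hab.symm
  set x := (t - a).val with hxdef
  set y := (b - a).val with hydef
  have hxy : x ≠ y := by
    intro h
    apply htb
    have h2 : t - a = b - a := ZMod.val_injective n h
    exact sub_left_injective h2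
  have hxn : x < n := ZMod.val_lt _
  have hyn : y < n := ZMod.val_lt _
  rcases lt_or_gt_of_ne hxy with h | h
  · left
    simp only [Arc, mem_filter, mem_univ, true_and]
    exact ⟨Nat.pos_of_ne_zero hx0, h⟩
  · right
    simp only [Arc, mem_filter, mem_univ, true_and]
    have e1 : t - b = ((x - y : ℕ) : ZMod n) := by
      rw [Nat.cast_sub h.le, natCast_val_self, natCast_val_self]
      ring
    have e2 : a - b = ((n - y : ℕ) : ZMod n) := by
      rw [Nat.cast_sub hyn.le, natCast_val_self, ZMod.natCast_self]
      ring
    have v1 : (t - b).val = x - y := by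
      rw [e1, ZMod.val_natCast, Nat.mod_eq_of_lt (by omega)]
    have v2 : (a - b).val = n - y := by
      rw [e2, ZMod.val_natCast, Nat.mod_eq_of_lt (by omega)]
    rw [v1, v2]
    omega

/-- every cylindrical semi-bar `k`-visibility graph, drawn with vertices in
convex position in the cyclic order of the bars and edges as chords, has no `k+2` pairwise
crossing edges, i.e. it is `(k+2)`-quasiplanar convex geometric. -/
theorem stmt6 (k : ℕ) [NeZero n] (ℓ : ZMod n → ℝ) (hinj : Function.Injective ℓ) :
    QuasiPlanar (k + 2) (CylGraph k ℓ) := by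
  rintro ⟨f, g, hadj, hcross⟩
  obtain ⟨p0, -, hp0⟩ := Finset.exists_min_image (univ : Finset (Fin (k+2)))
    (fun p => min (ℓ (f p)) (ℓ (g p))) ⟨0, mem_univ 0⟩
  set a := f p0 with ha
  set b := g p0 with hb
  set μ := min (ℓ a) (ℓ b) with hμ
  have hab : a ≠ b := (hadj p0).1
  have hC : ∀ q, q ≠ p0 → Crosses a b (f q) (g q) := fun q hq => hcross p0 q (Ne.symm hq)
  have hkey : ∀ q, q ≠ p0 → μ < ℓ (f q) ∧ μ < ℓ (g q) := by
    intro q hq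
    obtain ⟨-, -, hafq, hagq, hbfq, hbgq, -⟩ := hC q hq
    have hle : μ ≤ min (ℓ (f q)) (ℓ (g q)) := hp0 q (mem_univ q)
    have hμab : μ = ℓ a ∨ μ = ℓ b := min_choice _ _
    constructor
    · refine lt_of_le_of_ne (hle.trans (min_le_left _ _)) ?_
      rcases hμab with h | h <;> rw [h]
      · exact fun he => hafq (hinj he)
      · exact fun he => hbfq (hinj he)
    · refine lt_of_le_of_ne (hle.trans (min_le_right _ _)) ?_
      rcases hμab with h | h <;> rw [h]
      · exact fun he => hagq (hinj he)
      · exact fun he => hbgq (hinj he)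
  have main : ∀ c d : ZMod n, min (ℓ c) (ℓ d) = μ →
      (∀ q, q ≠ p0 → f q ∈ Arc c d ∨ g q ∈ Arc c d) → k + 1 ≤ exceedCount ℓ c d := by
    intro c d hmin hmem
    set A := Arc c d with hA
    set φ : Fin (k+2) → ZMod n := fun q => if f q ∈ A then f q else g q with hφdef
    have hφ : ∀ q, q ≠ p0 → φ q ∈ A ∧ (φ q = f q ∨ φ q = g q) := by
      intro q hq
      by_cases h : f q ∈ A
      · exact ⟨by simp [hφdef, h], Or.inl (by simp [hφdef, h])⟩
      · have hg : g q ∈ A := (hmem q hq).resolve_left h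
        exact ⟨by simp [hφdef, h, hg], Or.inr (by simp [hφdef, h])⟩
    have hmaps : ∀ q ∈ univ.erase p0, φ q ∈ A.filter (fun t => min (ℓ c) (ℓ d) < ℓ t) := by
      intro q hq
      have hq' : q ≠ p0 := (Finset.mem_erase.mp hq).1
      obtain ⟨hmemA, hor⟩ := hφ q hq'
      refine Finset.mem_filter.mpr ⟨hmemA, ?_⟩
      rw [hmin]
      rcases hor with h | h <;> rw [h]
      · exact (hkey q hq').1
      · exact (hkey q hq').2
    have hinj' : Set.InjOn φ (univ.erase p0) := by
      intro q hqm q' hq'm hEq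
      by_contra hne
      obtain ⟨-, -, h1, h2, h3, h4, -⟩ := hcross q q' hne
      obtain ⟨-, o1⟩ := hφ q (Finset.mem_erase.mp hqm).1
      obtain ⟨-, o2⟩ := hφ q' (Finset.mem_erase.mp hq'm).1
      rcases o1 with e1 | e1 <;> rcases o2 with e2 | e2 <;> rw [e1, e2] at hEq
      exacts [h1 hEq, h2 hEq, h3 hEq, h4 hEq]
    have hcard := Finset.card_le_card_of_injOn φ hmaps hinj'
    have hce : (univ.erase p0).card = k + 1 := by
      rw [Finset.card_erase_of_mem (mem_univ _), Finset.card_univ, Fintype.card_fin]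
      omega
    rw [hce] at hcard
    exact hcard
  have hside1 : ∀ q, q ≠ p0 → f q ∈ Arc a b ∨ g q ∈ Arc a b := by
    intro q hq
    obtain ⟨-, -, -, -, -, -, hx⟩ := hC q hq
    rcases hx with ⟨h1, -⟩ | ⟨h1, -⟩
    · exact Or.inl h1
    · exact Or.inr h1
  have hside2 : ∀ q, q ≠ p0 → f q ∈ Arc b a ∨ g q ∈ Arc b a := by
    intro q hq
    obtain ⟨-, -, hafq, hagq, hbfq, hbgq, hx⟩ := hC q hq
    rcases hx with ⟨-, h2⟩ | ⟨-, h2⟩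
    · right
      rcases arc_cover hab hagq.symm hbgq.symm with h | h
      · exact absurd h h2
      · exact h
    · left
      rcases arc_cover hab hafq.symm hbfq.symm with h | h
      · exact absurd h h2
      · exact h
  have h1 := main a b rfl hside1
  have h2 := main b a (by rw [min_comm]) hside2
  rcases (hadj p0).2 with h | h <;> rw [← ha, ← hb] at h <;> omega
end

section
/- The maximum number of edges in a cylindrical semi-bar k-visibility graph with n vertices is (k+1)(2n−2k−3) when n ≥ 2k+2, and n(n−1)/2 when n ≤ 2k+2. (Upper bound: any cylindrical semi-bar k-visibility graph with arbitrary, possibly non-injective visibility, has at most this many edges; lower bound: this number is achieved.) -/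
open Finset
open scoped Classical

variable {n : ℕ}

/-- Count of bars on the open arc from `i` to `j` with length `≥ min (ℓ i) (ℓ j)` (the
correct blocking condition when lengths may coincide). -/
noncomputable def exceedCountGe [NeZero n] (ℓ : ZMod n → ℝ) (i j : ZMod n) : ℕ :=
  ((Arc i j).filter fun t => min (ℓ i) (ℓ j) ≤ ℓ t).card

/-- Cylindrical semi-bar `k`-visibility graph for arbitrary (possibly non-injective) lengths. -/
noncomputable def CylGraphGe (k : ℕ) [NeZero n] (ℓ : ZMod n → ℝ) : SimpleGraph (ZMod n) where
  Adj i j := i ≠ j ∧ (exceedCountGe ℓ i j ≤ k ∨ exceedCountGe ℓ j i ≤ k)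
  symm := ⟨fun i j h => ⟨h.1.symm, h.2.symm⟩⟩
  loopless := ⟨fun i h => h.1 rfl⟩

noncomputable instance (k : ℕ) [NeZero n] (ℓ : ZMod n → ℝ) :
    DecidableRel (CylGraphGe k ℓ).Adj := Classical.decRel _

lemma zmod_cast_val [NeZero n] (x : ZMod n) : ((x.val : ℕ) : ZMod n) = x :=
  ZMod.natCast_rightInverse x

lemma card_filter_val_shift [NeZero n] (i : ZMod n) (p : ℕ → Prop) [DecidablePred p] :
    (univ.filter fun t : ZMod n => p ((t - i).val)).card = ((range n).filter p).card := by
  apply Finset.card_nbij' (i := fun t => (t - i).val) (j := fun a => i + (a : ℕ))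
  · intro a ha
    simp only [Finset.mem_coe, mem_filter, mem_univ, true_and, mem_range] at ha ⊢
    exact ⟨ZMod.val_lt _, ha⟩
  · intro a ha
    simp only [Finset.mem_coe, mem_filter, mem_range] at ha
    simp only [Finset.mem_coe, mem_filter, mem_univ, true_and, add_sub_cancel_left,
      ZMod.val_cast_of_lt ha.1]
    exact ha.2
  · intro a _
    simp [zmod_cast_val]
  · intro a ha
    simp only [Finset.mem_coe, mem_filter, mem_range] at ha
    simp [add_sub_cancel_left, ZMod.val_cast_of_lt ha.1]

lemma card_Arc [NeZero n] (i j : ZMod n) : (Arc i j).card = (j - i).val - 1 := by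
  have hM : (j - i).val < n := ZMod.val_lt _
  have : (Arc i j) = univ.filter fun t : ZMod n =>
      (fun d => 0 < d ∧ d < (j - i).val) ((t - i).val) := rfl
  rw [this]
  rw [card_filter_val_shift i (fun d => 0 < d ∧ d < (j - i).val)]
  have : (range n).filter (fun d => 0 < d ∧ d < (j - i).val) = Ico 1 ((j - i).val) := by
    ext d; simp only [mem_filter, mem_range, mem_Ico]; omega
  rw [this, Nat.card_Ico]

lemma val_sub_comm [NeZero n] {i j : ZMod n} (h : j ≠ i) :
    (i - j).val = n - (j - i).val := by
  haveI : NeZero (j - i) := ⟨sub_ne_zero.2 h⟩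
  rw [show i - j = -(j - i) by ring, ZMod.val_neg_of_ne_zero]

lemma arc_mem_ne_left [NeZero n] {i j t : ZMod n} (ht : t ∈ Arc i j) : t ≠ i := by
  simp only [Arc, mem_filter] at ht
  intro h; subst h; simp at ht

lemma arc_mem_ne_right [NeZero n] {i j t : ZMod n} (ht : t ∈ Arc i j) : t ≠ j := by
  simp only [Arc, mem_filter] at ht
  intro h; subst h; omega

/-- exceed counts from/to a global strict minimum vertex. -/
lemma exceed_min_left [NeZero n] {ℓ : ZMod n → ℝ} {v : ZMod n}
    (hv : ∀ i, i ≠ v → ℓ v < ℓ i) {j : ZMod n} (hj : j ≠ v) :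
    exceedCountGe ℓ v j = (j - v).val - 1 := by
  rw [exceedCountGe, ← card_Arc v j]
  congr 1
  apply filter_true_of_mem
  intro t ht
  have := hv j hj
  have h2 := hv t (arc_mem_ne_left ht)
  simp only [min_le_iff]
  left; linarith

lemma exceed_min_right [NeZero n] {ℓ : ZMod n → ℝ} {v : ZMod n}
    (hv : ∀ i, i ≠ v → ℓ v < ℓ i) {j : ZMod n} (hj : j ≠ v) :
    exceedCountGe ℓ j v = (v - j).val - 1 := by
  rw [exceedCountGe, ← card_Arc j v]
  congr 1
  apply filter_true_of_mem
  intro t ht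
  have := hv j hj
  have h2 := hv t (arc_mem_ne_right ht)
  simp only [min_le_iff]
  right; linarith

lemma adj_min_iff [NeZero n] {k : ℕ} {ℓ : ZMod n → ℝ} {v : ZMod n}
    (hv : ∀ i, i ≠ v → ℓ v < ℓ i) (j : ZMod n) :
    (CylGraphGe k ℓ).Adj v j ↔
      ((j - v).val ≠ 0 ∧ ((j - v).val - 1 ≤ k ∨ n - (j - v).val - 1 ≤ k)) := by
  constructor
  · rintro ⟨hne, h⟩
    have hj : j ≠ v := fun h' => hne h'.symm
    have hd : (j - v).val ≠ 0 := fun h' => hj (sub_eq_zero.1 ((ZMod.val_eq_zero _).1 h'))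
    rw [exceed_min_left hv hj, exceed_min_right hv hj, val_sub_comm hj] at h
    exact ⟨hd, by omega⟩
  · rintro ⟨hd, h⟩
    have hj : j ≠ v := by
      intro h'; subst h'; simp at hd
    refine ⟨fun h' => hj h'.symm, ?_⟩
    rw [exceed_min_left hv hj, exceed_min_right hv hj, val_sub_comm hj]
    omega

lemma degree_min [NeZero n] {k : ℕ} {ℓ : ZMod n → ℝ} {v : ZMod n}
    (hv : ∀ i, i ≠ v → ℓ v < ℓ i) :
    (CylGraphGe k ℓ).degree v =
      ((range n).filter fun d => d ≠ 0 ∧ (d - 1 ≤ k ∨ n - d - 1 ≤ k)).card := by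
  rw [← SimpleGraph.card_neighborFinset_eq_degree]
  rw [show (CylGraphGe k ℓ).neighborFinset v = univ.filter
      (fun t : ZMod n => (fun d => d ≠ 0 ∧ (d - 1 ≤ k ∨ n - d - 1 ≤ k)) ((t - v).val)) by
    ext j
    rw [SimpleGraph.mem_neighborFinset, adj_min_iff hv]
    simp]
  rw [card_filter_val_shift v (fun d => d ≠ 0 ∧ (d - 1 ≤ k ∨ n - d - 1 ≤ k))]

lemma degree_min_le [NeZero n] {k : ℕ} {ℓ : ZMod n → ℝ} {v : ZMod n}
    (hv : ∀ i, i ≠ v → ℓ v < ℓ i) :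
    (CylGraphGe k ℓ).degree v ≤ 2 * k + 2 := by
  rw [degree_min hv]
  calc ((range n).filter fun d => d ≠ 0 ∧ (d - 1 ≤ k ∨ n - d - 1 ≤ k)).card
      ≤ ((Ico 1 (k + 2)) ∪ (Ico (n - k - 1) n)).card := by
        apply card_le_card
        intro d hd
        simp only [mem_filter, mem_range, mem_union, mem_Ico] at hd ⊢
        omega
    _ ≤ (Ico 1 (k + 2)).card + (Ico (n - k - 1) n).card := card_union_le _ _
    _ ≤ (k + 1) + (k + 1) := by
        rw [Nat.card_Ico, Nat.card_Ico]; omega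
    _ = 2 * k + 2 := by ring

lemma degree_min_eq [NeZero n] {k : ℕ} {ℓ : ZMod n → ℝ} {v : ZMod n}
    (hv : ∀ i, i ≠ v → ℓ v < ℓ i) (hn : 2 * k + 4 ≤ n) :
    (CylGraphGe k ℓ).degree v = 2 * k + 2 := by
  rw [degree_min hv]
  rw [show ((range n).filter fun d => d ≠ 0 ∧ (d - 1 ≤ k ∨ n - d - 1 ≤ k))
      = (Ico 1 (k + 2)) ∪ (Ico (n - k - 1) n) by
    ext d
    simp only [mem_filter, mem_range, mem_union, mem_Ico]
    omega]
  rw [card_union_of_disjoint (by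
    rw [Finset.disjoint_left]
    intro d h1 h2
    simp only [mem_Ico] at h1 h2
    omega)]
  rw [Nat.card_Ico, Nat.card_Ico]; omega

lemma exceed_shift [NeZero n] (ℓ : ZMod n → ℝ) (c i j : ZMod n) :
    exceedCountGe (fun x => ℓ (x + c)) i j = exceedCountGe ℓ (i + c) (j + c) := by
  unfold exceedCountGe
  apply Finset.card_nbij' (i := fun t => t + c) (j := fun s => s - c)
  · intro t ht
    simp only [Finset.mem_coe, Arc, mem_filter, mem_univ, true_and, add_sub_add_right_eq_sub] at ht ⊢
    exact ht
  · intro s hs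
    simp only [Finset.mem_coe, Arc, mem_filter, mem_univ, true_and] at hs ⊢
    have e1 : s - c - i = s - (i + c) := by ring
    have e2 : j + c - (i + c) = j - i := by ring
    have e3 : s - c + c = s := by ring
    rw [e1, e3]
    rw [e2] at hs
    exact hs
  · intro t _; simp
  · intro s _; simp

lemma card_edgeFinset_shift [NeZero n] (k : ℕ) (ℓ : ZMod n → ℝ) (c : ZMod n) :
    (CylGraphGe k (fun x => ℓ (x + c))).edgeFinset.card = (CylGraphGe k ℓ).edgeFinset.card := by
  have iso : CylGraphGe k (fun x => ℓ (x + c)) ≃g CylGraphGe k ℓ := by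
    refine ⟨Equiv.addRight c, ?_⟩
    intro i j
    show (CylGraphGe k ℓ).Adj (i + c) (j + c) ↔ _
    constructor
    · rintro ⟨hne, h⟩
      refine ⟨fun h' => hne (by rw [h']), ?_⟩
      rwa [exceed_shift, exceed_shift]
    · rintro ⟨hne, h⟩
      refine ⟨fun h' => hne (by
        have := add_right_cancel h'; exact this), ?_⟩
      rwa [exceed_shift, exceed_shift] at h
  rw [SimpleGraph.edgeFinset_card, SimpleGraph.edgeFinset_card]
  exact Fintype.card_congr iso.mapEdgeSet

/-- Perturbation: any Ge-graph is a subgraph of one with injective lengths. -/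
lemma exists_injective_superset [NeZero n] (k : ℕ) (ℓ : ZMod n → ℝ) :
    ∃ ℓ' : ZMod n → ℝ, Function.Injective ℓ' ∧
      (CylGraphGe k ℓ).edgeFinset.card ≤ (CylGraphGe k ℓ').edgeFinset.card := by
  -- find ε > 0 with ε * n < ℓ b - ℓ a whenever ℓ a < ℓ b
  obtain ⟨ε, hε, hsep⟩ : ∃ ε : ℝ, 0 < ε ∧ ∀ a b : ZMod n, ℓ a < ℓ b → ε * n < ℓ b - ℓ a := by
    set S := (univ ×ˢ univ).filter (fun p : ZMod n × ZMod n => ℓ p.1 < ℓ p.2) with hS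
    by_cases hne : S.Nonempty
    · set m := S.inf' hne (fun p => ℓ p.2 - ℓ p.1) with hm
      have hmpos : 0 < m := by
        rw [hm]
        apply (Finset.lt_inf'_iff _).2
        intro p hp
        simp only [hS, mem_filter] at hp
        linarith [hp.2]
      refine ⟨m / (n + 1), by positivity, ?_⟩
      intro a b hab
      have hmem : (a, b) ∈ S := by simp [hS, hab]
      have h1 : m ≤ ℓ b - ℓ a := Finset.inf'_le _ hmem
      have h2 : m / (n + 1) * n < m := by
        rw [div_mul_eq_mul_div, div_lt_iff₀ (by positivity)]
        nlinarith
      linarith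
    · refine ⟨1, one_pos, ?_⟩
      intro a b hab
      exact absurd (by simp [hS, hab] : (a,b) ∈ S) (fun h => hne ⟨_, h⟩)
  set ℓ' : ZMod n → ℝ := fun i => ℓ i + ε * i.val with hℓ'
  have hlt : ∀ a b : ZMod n, ℓ a < ℓ b → ℓ' a < ℓ' b := by
    intro a b hab
    have h1 := hsep a b hab
    have h2 : (a.val : ℝ) ≤ n := by exact_mod_cast (ZMod.val_lt a).le
    have h3 : (0:ℝ) ≤ b.val := by positivity
    simp only [hℓ']
    nlinarith
  have hinj : Function.Injective ℓ' := by
    intro a b hab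
    rcases lt_trichotomy (ℓ a) (ℓ b) with h | h | h
    · exact absurd hab (ne_of_lt (hlt a b h))
    · have hv : (a.val : ℝ) = b.val := by
        have h2 : ε * a.val = ε * b.val := by
          simp only [hℓ', h] at hab; linarith
        exact mul_left_cancel₀ (ne_of_gt hε) h2
      have : a.val = b.val := by exact_mod_cast hv
      exact ZMod.val_injective n this
    · exact absurd hab.symm (ne_of_lt (hlt b a h))
  refine ⟨ℓ', hinj, ?_⟩
  apply Finset.card_le_card
  rw [Finset.subset_iff]
  intro e he
  rw [SimpleGraph.mem_edgeFinset] at he ⊢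
  revert he
  refine Sym2.ind (fun i j => ?_) e
  rw [SimpleGraph.mem_edgeSet, SimpleGraph.mem_edgeSet]
  rintro ⟨hne, h⟩
  refine ⟨hne, ?_⟩
  have key : ∀ i j : ZMod n, exceedCountGe ℓ' i j ≤ exceedCountGe ℓ i j := by
    intro i j
    apply Finset.card_le_card
    intro t ht
    simp only [exceedCountGe, mem_filter, min_le_iff] at ht ⊢
    refine ⟨ht.1, ?_⟩
    by_contra hcon
    push_neg at hcon
    have c1 := hlt t i hcon.1
    have c2 := hlt t j hcon.2
    rcases ht.2 with h' | h' <;> linarith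
  rcases h with h | h
  · exact Or.inl (le_trans (key i j) h)
  · exact Or.inr (le_trans (key j i) h)

lemma val_sub'' [NeZero n] (x y : ZMod n) : (x - y).val = (x.val + (n - y.val)) % n := by
  have h : ((x.val + (n - y.val) : ℕ) : ZMod n) = x - y := by
    push_cast [Nat.cast_sub (le_of_lt (ZMod.val_lt y))]
    rw [ZMod.natCast_self, zmod_cast_val, zmod_cast_val]
    ring
  rw [← h, ZMod.val_natCast]

/-- normalized difference -/
def Dd (M u v : ℕ) : ℕ := if v ≤ u then u - v else u + M - v

lemma val_sub_eq_Dd [NeZero n] (x y : ZMod n) : (x - y).val = Dd n x.val y.val := by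
  rw [val_sub'', Dd]
  have hx := ZMod.val_lt x
  have hy := ZMod.val_lt y
  have hn : 0 < n := Nat.pos_of_ne_zero (NeZero.ne n)
  split_ifs with h
  · have e1 : x.val + (n - y.val) = (x.val - y.val) + n := by omega
    rw [e1, Nat.add_mod_right, Nat.mod_eq_of_lt (by omega)]
  · rw [Nat.mod_eq_of_lt (by omega)]; omega

section Del
variable {m : ℕ} [NeZero m]

/-- the embedding of `ZMod m` into `ZMod (m+1)` skipping the last vertex. -/
def emb (x : ZMod m) : ZMod (m + 1) := (x.val : ZMod (m + 1))

lemma val_emb (x : ZMod m) : (emb x).val = x.val :=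
  ZMod.val_cast_of_lt (lt_trans (ZMod.val_lt x) (Nat.lt_succ_self m))

lemma val_last : ((m : ZMod (m+1))).val = m := ZMod.val_cast_of_lt (Nat.lt_succ_self m)

lemma emb_ne_last (x : ZMod m) : emb x ≠ (m : ZMod (m+1)) := by
  intro h
  have := congrArg ZMod.val h
  rw [val_emb, val_last] at this
  exact absurd this (Nat.ne_of_lt (ZMod.val_lt x))

lemma emb_inj : Function.Injective (emb (m := m)) := by
  intro a b h
  have := congrArg ZMod.val h
  rw [val_emb, val_emb] at this
  exact ZMod.val_injective m this

lemma emb_surj {z : ZMod (m+1)} (hz : z ≠ (m : ZMod (m+1))) : ∃ x : ZMod m, emb x = z := by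
  have hv : z.val < m := by
    have h1 : z.val < m + 1 := ZMod.val_lt z
    have h2 : z.val ≠ m := fun h => hz (by rw [← zmod_cast_val z, h])
    omega
  refine ⟨(z.val : ZMod m), ?_⟩
  rw [emb, ZMod.val_cast_of_lt hv, zmod_cast_val]

lemma mem_arc_emb {a b t : ZMod m} : t ∈ Arc a b ↔ emb t ∈ Arc (emb a) (emb b) := by
  simp only [Arc, mem_filter, mem_univ, true_and, val_sub_eq_Dd, val_emb]
  have h1 := ZMod.val_lt t
  have h2 := ZMod.val_lt a
  have h3 := ZMod.val_lt b
  unfold Dd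
  split_ifs <;> omega

variable (k : ℕ) (ℓ : ZMod (m+1) → ℝ)

lemma exceed_del (hmin : ∀ i, i ≠ (m : ZMod (m+1)) → ℓ (m : ZMod (m+1)) < ℓ i)
    (a b : ZMod m) :
    exceedCountGe (fun x => ℓ (emb x)) a b = exceedCountGe ℓ (emb a) (emb b) := by
  unfold exceedCountGe
  apply Finset.card_nbij' (i := fun t => emb t) (j := fun z => ((z.val : ℕ) : ZMod m))
  · intro t ht
    simp only [Finset.mem_coe, mem_filter] at ht ⊢
    exact ⟨mem_arc_emb.1 ht.1, ht.2⟩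
  · intro z hz
    simp only [Finset.mem_coe, mem_filter] at hz ⊢
    have hzl : z ≠ (m : ZMod (m+1)) := by
      intro h
      rw [h] at hz
      have c1 := hmin (emb a) (emb_ne_last a)
      have c2 := hmin (emb b) (emb_ne_last b)
      have := hz.2
      simp only [min_le_iff] at this
      rcases this with h' | h' <;> linarith
    obtain ⟨x, hx⟩ := emb_surj hzl
    subst hx
    rw [show ((emb x).val : ZMod m) = x from by rw [val_emb, zmod_cast_val]]
    exact ⟨mem_arc_emb.2 hz.1, hz.2⟩
  · intro t _
    beta_reduce
    rw [val_emb, zmod_cast_val]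
  · intro z hz
    simp only [Finset.mem_coe, mem_filter] at hz
    have hzl : z ≠ (m : ZMod (m+1)) := by
      intro h
      rw [h] at hz
      have c1 := hmin (emb a) (emb_ne_last a)
      have c2 := hmin (emb b) (emb_ne_last b)
      have := hz.2
      simp only [min_le_iff] at this
      rcases this with h' | h' <;> linarith
    obtain ⟨x, hx⟩ := emb_surj hzl
    beta_reduce
    rw [← hx, val_emb, zmod_cast_val]

lemma adj_del (hmin : ∀ i, i ≠ (m : ZMod (m+1)) → ℓ (m : ZMod (m+1)) < ℓ i)
    (a b : ZMod m) :
    (CylGraphGe k (fun x => ℓ (emb x))).Adj a b ↔ (CylGraphGe k ℓ).Adj (emb a) (emb b) := by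
  show (a ≠ b ∧ _) ↔ (emb a ≠ emb b ∧ _)
  rw [exceed_del ℓ hmin a b, exceed_del ℓ hmin b a]
  constructor
  · rintro ⟨h1, h2⟩; exact ⟨fun h => h1 (emb_inj h), h2⟩
  · rintro ⟨h1, h2⟩; exact ⟨fun h => h1 (by rw [h]), h2⟩

lemma degree_emb (hmin : ∀ i, i ≠ (m : ZMod (m+1)) → ℓ (m : ZMod (m+1)) < ℓ i)
    (x : ZMod m) :
    (CylGraphGe k ℓ).degree (emb x) =
      (CylGraphGe k (fun y => ℓ (emb y))).degree x
        + (if (CylGraphGe k ℓ).Adj (emb x) (m : ZMod (m+1)) then 1 else 0) := by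
  rw [← SimpleGraph.card_neighborFinset_eq_degree, ← SimpleGraph.card_neighborFinset_eq_degree]
  set N := (CylGraphGe k ℓ).neighborFinset (emb x) with hN
  have herase : N.erase (m : ZMod (m+1))
      = ((CylGraphGe k (fun y => ℓ (emb y))).neighborFinset x).image emb := by
    ext z
    simp only [mem_erase, mem_image, SimpleGraph.mem_neighborFinset, hN]
    constructor
    · rintro ⟨hz, hadj⟩
      obtain ⟨y, hy⟩ := emb_surj hz
      exact ⟨y, (adj_del k ℓ hmin x y).2 (by rwa [hy]), hy⟩
    · rintro ⟨y, hadj, hy⟩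
      rw [← hy]
      exact ⟨emb_ne_last y, (adj_del k ℓ hmin x y).1 hadj⟩
  have hcard : (((CylGraphGe k (fun y => ℓ (emb y))).neighborFinset x).image emb).card
      = ((CylGraphGe k (fun y => ℓ (emb y))).neighborFinset x).card :=
    Finset.card_image_of_injective _ emb_inj
  by_cases hadj : (CylGraphGe k ℓ).Adj (emb x) (m : ZMod (m+1))
  · have hmem : (m : ZMod (m+1)) ∈ N := by rw [hN, SimpleGraph.mem_neighborFinset]; exact hadj
    rw [if_pos hadj]
    have := Finset.card_erase_add_one hmem
    rw [herase, hcard] at this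
    omega
  · have hmem : (m : ZMod (m+1)) ∉ N := by
      rw [hN, SimpleGraph.mem_neighborFinset]; exact hadj
    rw [if_neg hadj]
    rw [← Finset.erase_eq_of_notMem hmem, herase, hcard]
    omega

lemma card_adj_last (hmin : ∀ i, i ≠ (m : ZMod (m+1)) → ℓ (m : ZMod (m+1)) < ℓ i) :
    (univ.filter fun x : ZMod m => (CylGraphGe k ℓ).Adj (emb x) (m : ZMod (m+1))).card
      = (CylGraphGe k ℓ).degree (m : ZMod (m+1)) := by
  rw [← SimpleGraph.card_neighborFinset_eq_degree]
  apply Finset.card_nbij (i := emb)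
  · intro x hx
    simp only [Finset.mem_coe, mem_filter, mem_univ, true_and] at hx
    rw [Finset.mem_coe, SimpleGraph.mem_neighborFinset]
    exact hx.symm
  · intro a _ b _ h
    exact emb_inj h
  · intro z hz
    rw [Finset.mem_coe, SimpleGraph.mem_neighborFinset] at hz
    have hzl : z ≠ (m : ZMod (m+1)) := hz.ne'
    obtain ⟨y, hy⟩ := emb_surj hzl
    refine ⟨y, ?_, hy⟩
    rw [Finset.mem_coe]
    simp only [mem_filter, mem_univ, true_and]
    rw [hy]; exact hz.symm

lemma card_del (hmin : ∀ i, i ≠ (m : ZMod (m+1)) → ℓ (m : ZMod (m+1)) < ℓ i) :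
    (CylGraphGe k ℓ).edgeFinset.card
      = (CylGraphGe k (fun x : ZMod m => ℓ (emb x))).edgeFinset.card
        + (CylGraphGe k ℓ).degree (m : ZMod (m+1)) := by
  have hsumn := SimpleGraph.sum_degrees_eq_twice_card_edges (CylGraphGe k ℓ)
  have hsumm := SimpleGraph.sum_degrees_eq_twice_card_edges
    (CylGraphGe k (fun x : ZMod m => ℓ (emb x)))
  have hsplit : ∑ v : ZMod (m+1), (CylGraphGe k ℓ).degree v
      = (CylGraphGe k ℓ).degree (m : ZMod (m+1))
        + ∑ x : ZMod m, (CylGraphGe k ℓ).degree (emb x) := by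
    rw [← Finset.sum_erase_add _ _ (mem_univ (m : ZMod (m+1))), add_comm]
    congr 1
    refine (Finset.sum_nbij (i := emb) ?_ ?_ ?_ ?_).symm
    · intro x _
      exact Finset.mem_erase.2 ⟨emb_ne_last x, mem_univ _⟩
    · intro a _ b _ h; exact emb_inj h
    · intro z hz
      rw [Finset.mem_coe] at hz
      obtain ⟨y, hy⟩ := emb_surj (Finset.mem_erase.1 hz).1
      exact ⟨y, Finset.mem_coe.2 (mem_univ _), hy⟩
    · intro x _; rfl
  have hsum2 : ∑ x : ZMod m, (CylGraphGe k ℓ).degree (emb x)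
      = (∑ x : ZMod m, (CylGraphGe k (fun y => ℓ (emb y))).degree x)
        + (CylGraphGe k ℓ).degree (m : ZMod (m+1)) := by
    rw [Finset.sum_congr rfl (fun x _ => degree_emb k ℓ hmin x), Finset.sum_add_distrib]
    congr 1
    rw [← card_adj_last k ℓ hmin, Finset.card_filter]
  rw [hsplit, hsum2, hsumm] at hsumn
  omega
end Del

/-! ### The bound and its arithmetic -/

def bound (n k : ℕ) : ℕ :=
  if 2 * k + 2 ≤ n then (k + 1) * (2 * n - (2 * k + 3)) else n * (n - 1) / 2

lemma bound_small {n k : ℕ} (h : n ≤ 2 * k + 3) : bound n k = n * (n - 1) / 2 := by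
  unfold bound
  split_ifs with h2
  · have hcase : n = 2 * k + 2 ∨ n = 2 * k + 3 := by omega
    rcases hcase with rfl | rfl
    · rw [show 2 * (2 * k + 2) - (2 * k + 3) = 2 * k + 1 by omega,
        show 2 * k + 2 - 1 = 2 * k + 1 by omega]
      symm
      apply Nat.div_eq_of_eq_mul_left (by norm_num)
      ring
    · rw [show 2 * (2 * k + 3) - (2 * k + 3) = 2 * k + 3 by omega,
        show 2 * k + 3 - 1 = 2 * k + 2 by omega]
      symm
      apply Nat.div_eq_of_eq_mul_left (by norm_num)
      ring
  · rfl

lemma bound_step {m k : ℕ} (h : 2 * k + 3 ≤ m) :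
    bound m k + (2 * k + 2) = bound (m + 1) k := by
  unfold bound
  rw [if_pos (by omega), if_pos (by omega)]
  rw [show 2 * (m + 1) - (2 * k + 3) = (2 * m - (2 * k + 3)) + 2 by omega, Nat.mul_add]
  omega

lemma card_edge_le_bound_small [NeZero n] (k : ℕ) (G : SimpleGraph (ZMod n))
    [DecidableRel G.Adj] (h : n ≤ 2 * k + 3) :
    G.edgeFinset.card ≤ bound n k := by
  rw [bound_small h]
  have h2 := SimpleGraph.card_edgeFinset_le_card_choose_two (G := G)
  rwa [ZMod.card, Nat.choose_two_right] at h2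

/-! ### The upper bound -/

lemma UB : ∀ (n : ℕ) [NeZero n] (k : ℕ) (ℓ : ZMod n → ℝ),
    (CylGraphGe k ℓ).edgeFinset.card ≤ bound n k := by
  intro n
  induction n using Nat.strong_induction_on with
  | _ n ih =>
    intro _ k ℓ
    obtain ⟨ℓ', hinj, hle⟩ := exists_injective_superset k ℓ
    refine le_trans hle ?_
    by_cases hsmall : n ≤ 2 * k + 3
    · exact card_edge_le_bound_small k _ hsmall
    · push_neg at hsmall
      obtain ⟨v, -, hv⟩ := Finset.exists_min_image univ ℓ' ⟨0, mem_univ 0⟩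
      obtain ⟨m, rfl⟩ : ∃ m, n = m + 1 := ⟨n - 1, by omega⟩
      haveI : NeZero m := ⟨by omega⟩
      have hlast : (m : ZMod (m+1)) + (v - (m : ZMod (m+1))) = v := by ring
      have hmin : ∀ i : ZMod (m+1), i ≠ (m : ZMod (m+1)) →
          ℓ' ((m : ZMod (m+1)) + (v - (m : ZMod (m+1))))
            < ℓ' (i + (v - (m : ZMod (m+1)))) := by
        intro i hi
        have hne : i + (v - (m : ZMod (m+1))) ≠ v := by
          intro h
          apply hi
          have h' : i + (v - (m : ZMod (m+1))) = (m : ZMod (m+1)) + (v - (m : ZMod (m+1))) := by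
            rw [hlast]; exact h
          exact add_right_cancel h'
        have h1 : ℓ' v ≤ ℓ' (i + (v - (m : ZMod (m+1)))) := hv _ (mem_univ _)
        have h2 : ℓ' v ≠ ℓ' (i + (v - (m : ZMod (m+1)))) := fun h => hne (hinj h).symm
        rw [hlast]
        exact lt_of_le_of_ne h1 h2
      rw [← card_edgeFinset_shift k ℓ' (v - (m : ZMod (m+1)))]
      rw [card_del k (fun x => ℓ' (x + (v - (m : ZMod (m+1))))) hmin]
      have h1 := ih m (by omega) k
        (fun x : ZMod m => (fun y => ℓ' (y + (v - (m : ZMod (m+1))))) (emb x))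
      have h2 := degree_min_le (k := k)
        (ℓ := fun x => ℓ' (x + (v - (m : ZMod (m+1))))) (v := (m : ZMod (m+1))) hmin
      calc _ ≤ bound m k + (2 * k + 2) := Nat.add_le_add h1 h2
        _ = bound (m + 1) k := bound_step (by omega)

/-! ### The lower bound: decreasing lengths -/

def IsDec [NeZero n] (ℓ : ZMod n → ℝ) : Prop :=
  ∀ x y : ZMod n, x.val < y.val → ℓ y < ℓ x

lemma dec_exceed₁ [NeZero n] {ℓ : ZMod n → ℝ} {i j : ZMod n}
    (hij : i.val < j.val) : exceedCountGe ℓ i j ≤ j.val - i.val - 1 := by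
  calc exceedCountGe ℓ i j ≤ (Arc i j).card := card_le_card (filter_subset _ _)
    _ = (j - i).val - 1 := card_Arc i j
    _ ≤ j.val - i.val - 1 := by
        rw [val_sub_eq_Dd]; unfold Dd; split_ifs <;> omega

set_option maxHeartbeats 1000000 in
lemma dec_exceed₂ [NeZero n] {ℓ : ZMod n → ℝ} (hd : IsDec ℓ) {i j : ZMod n}
    (hij : i.val < j.val) : exceedCountGe ℓ j i ≤ i.val := by
  have hjv := ZMod.val_lt j
  have hiv := ZMod.val_lt i
  have hmin : min (ℓ j) (ℓ i) = ℓ j := min_eq_left (le_of_lt (hd i j hij))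
  have hsub : (Arc j i).filter (fun t => min (ℓ j) (ℓ i) ≤ ℓ t) ⊆
      univ.filter (fun t : ZMod n => (fun d => d < i.val) ((t - 0).val)) := by
    intro t ht
    simp only [Arc, mem_filter, mem_univ, true_and, sub_zero, hmin] at ht ⊢
    obtain ⟨⟨h1, h2⟩, h3⟩ := ht
    have htv : ¬ (j.val < t.val) := fun h => absurd (hd j t h) (not_lt.2 h3)
    have htne : t ≠ j := by
      intro h; subst h; simp at h1
    have htvlt : t.val < j.val :=
      lt_of_le_of_ne (not_lt.1 htv) (fun h => htne (ZMod.val_injective n h))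
    rw [val_sub_eq_Dd, val_sub_eq_Dd] at h2
    unfold Dd at h2
    split_ifs at h2 <;> omega
  calc exceedCountGe ℓ j i ≤ _ := card_le_card hsub
    _ = ((range n).filter (fun d => d < i.val)).card := card_filter_val_shift (0 : ZMod n) (fun d => d < i.val)
    _ = i.val := by
        rw [show (range n).filter (fun d => d < i.val) = range i.val from by
          ext d; simp only [mem_filter, mem_range]; omega]
        exact card_range _

lemma dec_complete [NeZero n] {k : ℕ} {ℓ : ZMod n → ℝ} (hd : IsDec ℓ)
    (hn : n ≤ 2 * k + 3) : CylGraphGe k ℓ = ⊤ := by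
  ext i j
  simp only [SimpleGraph.top_adj]
  constructor
  · exact fun h => h.1
  · intro hne
    refine ⟨hne, ?_⟩
    have hvne : i.val ≠ j.val := fun h => hne (ZMod.val_injective n h)
    have hjv := ZMod.val_lt j
    have hiv := ZMod.val_lt i
    rcases lt_or_gt_of_ne hvne with h | h
    · have b1 := dec_exceed₁ (ℓ := ℓ) h
      have b2 := dec_exceed₂ hd h
      by_contra hcon
      push_neg at hcon
      omega
    · have b1 := dec_exceed₁ (ℓ := ℓ) h
      have b2 := dec_exceed₂ hd h
      by_contra hcon
      push_neg at hcon
      omega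

lemma card_complete [NeZero n] {k : ℕ} {ℓ : ZMod n → ℝ} (hG : CylGraphGe k ℓ = ⊤) :
    (CylGraphGe k ℓ).edgeFinset.card = n * (n - 1) / 2 := by
  have h2 := SimpleGraph.card_edgeFinset_top_eq_card_choose_two (V := ZMod n)
  rw [ZMod.card, Nat.choose_two_right] at h2
  rw [← h2]
  have hset : (CylGraphGe k ℓ).edgeFinset = (⊤ : SimpleGraph (ZMod n)).edgeFinset := by
    ext e
    rw [SimpleGraph.mem_edgeFinset, SimpleGraph.mem_edgeFinset, hG]
  rw [hset]

lemma LB : ∀ (n : ℕ) [NeZero n] (k : ℕ) (ℓ : ZMod n → ℝ), IsDec ℓ →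
    (CylGraphGe k ℓ).edgeFinset.card = bound n k := by
  intro n
  induction n using Nat.strong_induction_on with
  | _ n ih =>
    intro _ k ℓ hd
    by_cases hsmall : n ≤ 2 * k + 3
    · rw [bound_small hsmall]
      exact card_complete (dec_complete hd hsmall)
    · push_neg at hsmall
      obtain ⟨m, rfl⟩ : ∃ m, n = m + 1 := ⟨n - 1, by omega⟩
      haveI : NeZero m := ⟨by omega⟩
      have hmin : ∀ i, i ≠ (m : ZMod (m+1)) → ℓ (m : ZMod (m+1)) < ℓ i := by
        intro i hi
        apply hd
        rw [val_last]
        have h1 : i.val < m + 1 := ZMod.val_lt i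
        have h2 : i.val ≠ m := by
          intro h
          apply hi
          rw [← zmod_cast_val i, h]
        omega
      rw [card_del k ℓ hmin, degree_min_eq hmin (by omega)]
      have hdec : IsDec (fun x : ZMod m => ℓ (emb x)) := by
        intro x y hxy
        exact hd (emb x) (emb y) (by rw [val_emb, val_emb]; exact hxy)
      rw [ih m (by omega) k _ hdec, bound_step (by omega)]

/-- the maximum number of edges in a cylindrical semi-bar `k`-visibility graph
on `n` vertices is `(k+1)(2n-2k-3)` for `n ≥ 2k+2` and `n(n-1)/2` for `n ≤ 2k+2`: every
such graph has at most this many edges, and some such graph attains it. -/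
theorem stmt7 (k : ℕ) [NeZero n] :
    (∀ ℓ : ZMod n → ℝ, (CylGraphGe k ℓ).edgeFinset.card ≤
        if 2 * k + 2 ≤ n then (k + 1) * (2 * n - (2 * k + 3)) else n * (n - 1) / 2) ∧
    (∃ ℓ : ZMod n → ℝ, (CylGraphGe k ℓ).edgeFinset.card =
        if 2 * k + 2 ≤ n then (k + 1) * (2 * n - (2 * k + 3)) else n * (n - 1) / 2) := by
  constructor
  · intro ℓ
    exact UB n k ℓ
  · refine ⟨fun i => (n : ℝ) - i.val, ?_⟩
    apply LB
    intro x y hxy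
    have h : (x.val : ℝ) < y.val := by exact_mod_cast hxy
    simp only []
    linarith
end

section
/- Suppose a (linear) semi-bar k-visibility representation R with n distinct lengths ℓ(1), …, ℓ(n) (bottom to top) is curled into a cylindrical representation R′ (same cyclic order 1, …, n around the cylinder). The visibility graphs of R and R′ are equal if and only if: the top k+1 bars and bottom k+1 bars of R together are exactly the 2k+2 longest bars of R, and these 2k+2 longest bars are pairwise visible in R. -/
open Finset
open scoped Classical

variable {n : ℕ}

/-- In a linear semi-bar representation (bars `0, …, n-1` from bottom to top), the number of
bars strictly between `i` and `j` that are longer than the shorter of the two. -/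
noncomputable def btwCount (ℓ : Fin n → ℝ) (i j : Fin n) : ℕ :=
  (univ.filter fun t => min i j < t ∧ t < max i j ∧ min (ℓ i) (ℓ j) < ℓ t).card

/-- Linear semi-bar `k`-visibility adjacency. -/
noncomputable def LinAdj (k : ℕ) (ℓ : Fin n → ℝ) (i j : Fin n) : Prop :=
  i ≠ j ∧ btwCount ℓ i j ≤ k

/-- The open cyclic arc from `i` to `j` after curling bars `0, …, n-1` onto a cylinder. -/
def cycArc (i j : Fin n) : Finset (Fin n) :=
  univ.filter fun t => if i < j then (i < t ∧ t < j) else (i < t ∨ t < j)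

noncomputable def cycCount (ℓ : Fin n → ℝ) (i j : Fin n) : ℕ :=
  ((cycArc i j).filter fun t => min (ℓ i) (ℓ j) < ℓ t).card

/-- Cylindrical semi-bar `k`-visibility adjacency on the curled representation. -/
noncomputable def CylAdjF (k : ℕ) (ℓ : Fin n → ℝ) (i j : Fin n) : Prop :=
  i ≠ j ∧ (cycCount ℓ i j ≤ k ∨ cycCount ℓ j i ≤ k)


noncomputable def rk (ℓ : Fin n → ℝ) (i : Fin n) : ℕ :=
  (univ.filter fun v => ℓ i < ℓ v).card

lemma rk_lt_rk {ℓ : Fin n → ℝ} {i j : Fin n} (h : ℓ i < ℓ j) : rk ℓ j < rk ℓ i := by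
  apply card_lt_card
  constructor
  · intro t ht
    simp only [mem_filter, mem_univ, true_and] at *
    linarith
  · intro hsub
    have := hsub (mem_filter.mpr ⟨mem_univ j, h⟩)
    simp only [mem_filter, mem_univ, true_and] at this
    exact lt_irrefl _ this

lemma lt_of_rk_lt {ℓ : Fin n → ℝ} (hinj : Function.Injective ℓ) {i j : Fin n}
    (h : rk ℓ j < rk ℓ i) : ℓ i < ℓ j := by
  rcases lt_trichotomy (ℓ i) (ℓ j) with h1 | h1 | h1
  · exact h1
  · rw [hinj h1] at h; omega
  · exact absurd (rk_lt_rk h1) (by omega)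

lemma rk_inj {ℓ : Fin n → ℝ} (hinj : Function.Injective ℓ) {i j : Fin n}
    (h : rk ℓ i = rk ℓ j) : i = j := by
  rcases lt_trichotomy (ℓ i) (ℓ j) with h1 | h1 | h1
  · exact absurd (rk_lt_rk h1) (by omega)
  · exact hinj h1
  · exact absurd (rk_lt_rk h1) (by omega)

lemma card_val_lt {m : ℕ} (hm : m < n) :
    (univ.filter fun i : Fin n => i.val < m).card = m := by
  have : (univ.filter fun i : Fin n => i.val < m) = Finset.Iio ⟨m, hm⟩ := by
    ext i; simp [Fin.lt_def]
  rw [this, Fin.card_Iio]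

lemma card_val_ge {m : ℕ} (hm : m < n) :
    (univ.filter fun i : Fin n => m ≤ i.val).card = n - m := by
  have : (univ.filter fun i : Fin n => m ≤ i.val) = Finset.Ici ⟨m, hm⟩ := by
    ext i; simp [Fin.le_def]
  rw [this, Fin.card_Ici]


lemma exists_count_gt (S : Finset (Fin n)) (w : ℕ) (hw : w < S.card) :
    ∃ j ∈ S, (S.filter fun t => j < t).card = w := by
  have key : ∀ a₁ a₂ : Fin n, a₂ ∈ S → a₁ < a₂ →
      (S.filter fun t => a₂ < t).card < (S.filter fun t => a₁ < t).card := by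
    intro a₁ a₂ ha₂ h
    apply card_lt_card
    constructor
    · intro t ht; simp only [mem_filter] at *; exact ⟨ht.1, h.trans ht.2⟩
    · intro hsub
      have := hsub (mem_filter.mpr ⟨ha₂, h⟩)
      simp only [mem_filter] at this
      exact lt_irrefl _ this.2
  have hsurj := Finset.surj_on_of_inj_on_of_card_le
    (s := S) (t := Finset.range S.card)
    (fun a _ => (S.filter fun t => a < t).card)
    (fun a ha => by
      apply mem_range.mpr
      have : (S.filter fun t => a < t) ⊆ S.erase a := by
        intro t ht; simp only [mem_filter, mem_erase] at *
        exact ⟨fun he => absurd (he ▸ ht.2) (lt_irrefl _), ht.1⟩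
      calc (S.filter fun t => a < t).card ≤ (S.erase a).card := card_le_card this
        _ < S.card := card_erase_lt_of_mem ha)
    (fun a₁ a₂ ha₁ ha₂ heq => by
      by_contra hne
      rcases lt_or_gt_of_ne hne with h | h
      · exact absurd heq (Nat.ne_of_gt (key a₁ a₂ ha₂ h))
      · exact absurd heq (Nat.ne_of_lt (key a₂ a₁ ha₁ h)))
    (by rw [card_range])
  obtain ⟨a, ha, hval⟩ := hsurj w (mem_range.mpr hw)
  exact ⟨a, ha, hval.symm⟩

lemma exists_count_lt (S : Finset (Fin n)) (w : ℕ) (hw : w < S.card) :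
    ∃ j ∈ S, (S.filter fun t => t < j).card = w := by
  have key : ∀ a₁ a₂ : Fin n, a₁ ∈ S → a₁ < a₂ →
      (S.filter fun t => t < a₁).card < (S.filter fun t => t < a₂).card := by
    intro a₁ a₂ ha₁ h
    apply card_lt_card
    constructor
    · intro t ht; simp only [mem_filter] at *; exact ⟨ht.1, ht.2.trans h⟩
    · intro hsub
      have := hsub (mem_filter.mpr ⟨ha₁, h⟩)
      simp only [mem_filter] at this
      exact lt_irrefl _ this.2
  have hsurj := Finset.surj_on_of_inj_on_of_card_le
    (s := S) (t := Finset.range S.card)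
    (fun a _ => (S.filter fun t => t < a).card)
    (fun a ha => by
      apply mem_range.mpr
      have : (S.filter fun t => t < a) ⊆ S.erase a := by
        intro t ht; simp only [mem_filter, mem_erase] at *
        exact ⟨fun he => absurd (he ▸ ht.2) (lt_irrefl _), ht.1⟩
      calc (S.filter fun t => t < a).card ≤ (S.erase a).card := card_le_card this
        _ < S.card := card_erase_lt_of_mem ha)
    (fun a₁ a₂ ha₁ ha₂ heq => by
      by_contra hne
      rcases lt_or_gt_of_ne hne with h | h
      · exact absurd heq (Nat.ne_of_lt (key a₁ a₂ ha₁ h))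
      · exact absurd heq (Nat.ne_of_gt (key a₂ a₁ ha₂ h)))
    (by rw [card_range])
  obtain ⟨a, ha, hval⟩ := hsurj w (mem_range.mpr hw)
  exact ⟨a, ha, hval.symm⟩

lemma btwCount_comm (ℓ : Fin n → ℝ) (i j : Fin n) : btwCount ℓ i j = btwCount ℓ j i := by
  unfold btwCount
  rw [min_comm j i, max_comm j i, min_comm (ℓ j) (ℓ i)]

lemma btwCount_eq {ℓ : Fin n → ℝ} {i j : Fin n} (hij : i < j) :
    btwCount ℓ i j = (univ.filter fun t => i < t ∧ t < j ∧ min (ℓ i) (ℓ j) < ℓ t).card := by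
  unfold btwCount
  rw [min_eq_left hij.le, max_eq_right hij.le]

lemma cycCount_eq_btw {ℓ : Fin n → ℝ} {i j : Fin n} (hij : i < j) :
    cycCount ℓ i j = btwCount ℓ i j := by
  rw [btwCount_eq hij]
  unfold cycCount cycArc
  rw [filter_filter]
  congr 1
  apply filter_congr
  intro t _
  simp only [if_pos hij, and_assoc]

lemma cycCount_wrap {ℓ : Fin n → ℝ} {i j : Fin n} (hij : i < j) :
    cycCount ℓ j i = (univ.filter fun t => (j < t ∨ t < i) ∧ min (ℓ i) (ℓ j) < ℓ t).card := by
  unfold cycCount cycArc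
  rw [filter_filter]
  congr 1
  apply filter_congr
  intro t _
  rw [if_neg (asymm hij), min_comm (ℓ j) (ℓ i)]

lemma lin_to_cyl {k : ℕ} {ℓ : Fin n → ℝ} {i j : Fin n} (h : LinAdj k ℓ i j) :
    CylAdjF k ℓ i j := by
  obtain ⟨hne, hb⟩ := h
  refine ⟨hne, ?_⟩
  rcases lt_or_gt_of_ne hne with hij | hij
  · exact Or.inl (by rw [cycCount_eq_btw hij]; exact hb)
  · exact Or.inr (by rw [cycCount_eq_btw hij, btwCount_comm]; exact hb)

lemma LinAdj_comm {k : ℕ} {ℓ : Fin n → ℝ} {i j : Fin n} (h : LinAdj k ℓ i j) :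
    LinAdj k ℓ j i := ⟨h.1.symm, by rw [btwCount_comm]; exact h.2⟩

lemma CylAdjF_comm {k : ℕ} {ℓ : Fin n → ℝ} {i j : Fin n} (h : CylAdjF k ℓ i j) :
    CylAdjF k ℓ j i := ⟨h.1.symm, h.2.symm⟩


lemma keyA {k : ℕ} {ℓ : Fin n → ℝ}
    (heq : ∀ i j : Fin n, LinAdj k ℓ i j ↔ CylAdjF k ℓ i j)
    (s : Fin n) (hrk : 2 * k + 2 ≤ rk ℓ s)
    (hL : (univ.filter fun t => t < s ∧ ℓ s < ℓ t).card ≤ k) : False := by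
  set L := univ.filter fun t : Fin n => t < s ∧ ℓ s < ℓ t with hLdef
  set T := univ.filter fun t : Fin n => s < t ∧ ℓ s < ℓ t with hTdef
  have hsplit : rk ℓ s = L.card + T.card := by
    unfold rk
    rw [← card_union_of_disjoint]
    · congr 1
      ext t
      simp only [hLdef, hTdef, mem_union, mem_filter, mem_univ, true_and]
      constructor
      · intro h
        rcases lt_trichotomy t s with h1 | h1 | h1
        · exact Or.inl ⟨h1, h⟩
        · exact absurd h (by rw [h1]; exact lt_irrefl _)
        · exact Or.inr ⟨h1, h⟩
      · rintro (⟨_, h⟩ | ⟨_, h⟩) <;> exact h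
    · rw [Finset.disjoint_left]
      intro t ht1 ht2
      simp only [hLdef, hTdef, mem_filter] at ht1 ht2
      exact absurd (ht1.2.1.trans ht2.2.1) (lt_irrefl _)
  obtain ⟨j, hjT, hcnt⟩ := exists_count_gt T (k - L.card) (by omega)
  have hjmem : s < j ∧ ℓ s < ℓ j := by simpa [hTdef] using hjT
  -- partition T around j
  have hins : T.filter (fun t => ¬ t < j) = insert j (T.filter fun t => j < t) := by
    ext t
    simp only [mem_filter, mem_insert, not_lt]
    constructor
    · rintro ⟨htT, hle⟩
      rcases hle.lt_or_eq with h | h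
      · exact Or.inr ⟨htT, h⟩
      · exact Or.inl h.symm
    · rintro (rfl | ⟨htT, hlt⟩)
      · exact ⟨hjT, le_refl _⟩
      · exact ⟨htT, hlt.le⟩
  have hTsplit : (T.filter fun t => t < j).card + (1 + (T.filter fun t => j < t).card) = T.card := by
    have h1 := card_filter_add_card_filter_not (s := T) (p := fun t => t < j)
    rw [hins, card_insert_of_notMem (by simp)] at h1
    omega
  have hB : k + 1 ≤ (T.filter fun t => t < j).card := by omega
  -- btwCount ℓ s j
  have hbtw : btwCount ℓ s j = (T.filter fun t => t < j).card := by
    rw [btwCount_eq hjmem.1, min_eq_left hjmem.2.le, hTdef, filter_filter]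
    congr 1
    apply filter_congr
    intro t _
    tauto
  -- cycCount ℓ j s
  have hcyc : cycCount ℓ j s ≤ k := by
    rw [cycCount_wrap hjmem.1, min_eq_left hjmem.2.le]
    have hset : (univ.filter fun t => (j < t ∨ t < s) ∧ ℓ s < ℓ t)
        = (T.filter fun t => j < t) ∪ L := by
      ext t
      simp only [hLdef, hTdef, mem_union, mem_filter, mem_univ, true_and]
      constructor
      · rintro ⟨h1 | h1, h2⟩
        · exact Or.inl ⟨⟨hjmem.1.trans h1, h2⟩, h1⟩
        · exact Or.inr ⟨h1, h2⟩
      · rintro (⟨⟨_, h2⟩, h1⟩ | ⟨h1, h2⟩)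
        · exact ⟨Or.inl h1, h2⟩
        · exact ⟨Or.inr h1, h2⟩
    rw [hset, card_union_of_disjoint]
    · omega
    · rw [Finset.disjoint_left]
      intro t ht1 ht2
      simp only [hLdef, hTdef, mem_filter] at ht1 ht2
      exact absurd ((hjmem.1.trans ht1.2).trans ht2.2.1) (lt_irrefl _)
  have hlin : LinAdj k ℓ s j := (heq s j).mpr ⟨ne_of_lt hjmem.1, Or.inr hcyc⟩
  have := hlin.2
  rw [hbtw] at this
  omega

lemma keyB {k : ℕ} {ℓ : Fin n → ℝ}
    (heq : ∀ i j : Fin n, LinAdj k ℓ i j ↔ CylAdjF k ℓ i j)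
    (s : Fin n) (hrk : 2 * k + 2 ≤ rk ℓ s)
    (hR : (univ.filter fun t => s < t ∧ ℓ s < ℓ t).card ≤ k) : False := by
  set R := univ.filter fun t : Fin n => s < t ∧ ℓ s < ℓ t with hRdef
  set T := univ.filter fun t : Fin n => t < s ∧ ℓ s < ℓ t with hTdef
  have hsplit : rk ℓ s = T.card + R.card := by
    unfold rk
    rw [← card_union_of_disjoint]
    · congr 1
      ext t
      simp only [hRdef, hTdef, mem_union, mem_filter, mem_univ, true_and]
      constructor
      · intro h
        rcases lt_trichotomy t s with h1 | h1 | h1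
        · exact Or.inl ⟨h1, h⟩
        · exact absurd h (by rw [h1]; exact lt_irrefl _)
        · exact Or.inr ⟨h1, h⟩
      · rintro (⟨_, h⟩ | ⟨_, h⟩) <;> exact h
    · rw [Finset.disjoint_left]
      intro t ht1 ht2
      simp only [hRdef, hTdef, mem_filter] at ht1 ht2
      exact absurd (ht1.2.1.trans ht2.2.1) (lt_irrefl _)
  obtain ⟨i, hiT, hcnt⟩ := exists_count_lt T (k - R.card) (by omega)
  have himem : i < s ∧ ℓ s < ℓ i := by simpa [hTdef] using hiT
  have hins : T.filter (fun t => ¬ i < t) = insert i (T.filter fun t => t < i) := by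
    ext t
    simp only [mem_filter, mem_insert, not_lt]
    constructor
    · rintro ⟨htT, hle⟩
      rcases hle.lt_or_eq with h | h
      · exact Or.inr ⟨htT, h⟩
      · exact Or.inl h
    · rintro (rfl | ⟨htT, hlt⟩)
      · exact ⟨hiT, le_refl _⟩
      · exact ⟨htT, hlt.le⟩
  have hTsplit : (T.filter fun t => i < t).card + (1 + (T.filter fun t => t < i).card) = T.card := by
    have h1 := card_filter_add_card_filter_not (s := T) (p := fun t => i < t)
    rw [hins, card_insert_of_notMem (by simp)] at h1
    omega
  have hB : k + 1 ≤ (T.filter fun t => i < t).card := by omega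
  have hbtw : btwCount ℓ i s = (T.filter fun t => i < t).card := by
    rw [btwCount_eq himem.1, min_eq_right himem.2.le, hTdef, filter_filter]
    congr 1
    apply filter_congr
    intro t _
    tauto
  have hcyc : cycCount ℓ s i ≤ k := by
    rw [cycCount_wrap himem.1, min_eq_right himem.2.le]
    have hset : (univ.filter fun t => (s < t ∨ t < i) ∧ ℓ s < ℓ t)
        = (T.filter fun t => t < i) ∪ R := by
      ext t
      simp only [hRdef, hTdef, mem_union, mem_filter, mem_univ, true_and]
      constructor
      · rintro ⟨h1 | h1, h2⟩
        · exact Or.inr ⟨h1, h2⟩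
        · exact Or.inl ⟨⟨h1.trans himem.1, h2⟩, h1⟩
      · rintro (⟨⟨_, h2⟩, h1⟩ | ⟨h1, h2⟩)
        · exact ⟨Or.inr h1, h2⟩
        · exact ⟨Or.inl h1, h2⟩
    rw [hset, card_union_of_disjoint]
    · omega
    · rw [Finset.disjoint_left]
      intro t ht1 ht2
      simp only [hRdef, hTdef, mem_filter] at ht1 ht2
      exact absurd ((ht1.2.trans himem.1).trans ht2.2.1) (lt_irrefl _)
  have hlin : LinAdj k ℓ i s := (heq i s).mpr ⟨ne_of_lt himem.1, Or.inr hcyc⟩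
  have := hlin.2
  rw [hbtw] at this
  omega

lemma part_a {k : ℕ} {ℓ : Fin n → ℝ} (hn : 2 * k + 2 ≤ n) (hinj : Function.Injective ℓ)
    (heq : ∀ i j : Fin n, LinAdj k ℓ i j ↔ CylAdjF k ℓ i j) :
    ∀ i : Fin n, (i.val < k + 1 ∨ n - (k + 1) ≤ i.val) ↔ rk ℓ i < 2 * k + 2 := by
  set E := univ.filter fun i : Fin n => i.val < k + 1 ∨ n - (k + 1) ≤ i.val with hEdef
  set Top := univ.filter fun i : Fin n => rk ℓ i < 2 * k + 2 with hTopdef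
  have hE : E.card = 2 * k + 2 := by
    rw [hEdef, filter_or, card_union_of_disjoint]
    · rw [card_val_lt (by omega), card_val_ge (by omega)]
      omega
    · rw [Finset.disjoint_left]
      intro t ht1 ht2
      rw [mem_filter] at ht1 ht2
      omega
  have hTop : Top.card ≤ 2 * k + 2 := by
    rw [← card_range (2 * k + 2)]
    apply Finset.card_le_card_of_injOn (rk ℓ)
    · intro a ha
      simp only [hTopdef, mem_coe, mem_filter, mem_univ, true_and] at ha
      exact mem_range.mpr ha
    · intro a _ b _ hab
      exact rk_inj hinj hab
  have hsub : E ⊆ Top := by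
    intro i hi
    simp only [hEdef, hTopdef, mem_filter, mem_univ, true_and] at hi ⊢
    by_contra hcon
    push_neg at hcon
    rcases hi with h | h
    · refine keyA heq i hcon ?_
      have hsubL : (univ.filter fun t => t < i ∧ ℓ i < ℓ t) ⊆ Finset.Iio i := by
        intro t ht
        simp only [mem_filter, mem_Iio] at *
        exact ht.2.1
      have := card_le_card hsubL
      rw [Fin.card_Iio] at this
      omega
    · refine keyB heq i hcon ?_
      have hsubR : (univ.filter fun t => i < t ∧ ℓ i < ℓ t) ⊆ Finset.Ioi i := by
        intro t ht
        simp only [mem_filter, mem_Ioi] at *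
        exact ht.2.1
      have := card_le_card hsubR
      rw [Fin.card_Ioi] at this
      have hi2 : i.val < n := i.isLt
      omega
  have hET : E = Top := eq_of_subset_of_card_le hsub (by omega)
  intro i
  have h1 : i ∈ E ↔ i ∈ Top := by rw [hET]
  simpa only [hEdef, hTopdef, mem_filter, mem_univ, true_and] using h1

lemma part_b {k : ℕ} {ℓ : Fin n → ℝ} (hinj : Function.Injective ℓ)
    (heq : ∀ i j : Fin n, LinAdj k ℓ i j ↔ CylAdjF k ℓ i j) :
    ∀ i j : Fin n, i ≠ j → rk ℓ i < 2 * k + 2 → rk ℓ j < 2 * k + 2 → LinAdj k ℓ i j := by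
  have aux : ∀ i j : Fin n, i < j → rk ℓ i < 2 * k + 2 → rk ℓ j < 2 * k + 2 →
      LinAdj k ℓ i j := by
    intro i j hij hi hj
    have hne : i ≠ j := ne_of_lt hij
    have hlne : ℓ i ≠ ℓ j := fun h => hne (hinj h)
    obtain ⟨s, o, hmin, hsrk, ho, hone⟩ :
        ∃ s o : Fin n, min (ℓ i) (ℓ j) = ℓ s ∧ rk ℓ s < 2 * k + 2 ∧ (o = i ∨ o = j) ∧
          ℓ s < ℓ o := by
      rcases lt_or_gt_of_ne hlne with h | h
      · exact ⟨i, j, min_eq_left h.le, hi, Or.inr rfl, h⟩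
      · exact ⟨j, i, min_eq_right h.le, hj, Or.inl rfl, h⟩
    set Bset := univ.filter fun t : Fin n => i < t ∧ t < j ∧ ℓ s < ℓ t with hBdef
    set Wset := univ.filter fun t : Fin n => (j < t ∨ t < i) ∧ ℓ s < ℓ t with hWdef
    have hdisj : Disjoint Bset Wset := by
      rw [Finset.disjoint_left]
      intro t ht1 ht2
      simp only [hBdef, hWdef, mem_filter, mem_univ, true_and, Fin.lt_def] at ht1 ht2
      omega
    have hno : o ∉ Bset ∪ Wset := by
      intro hmem
      simp only [hBdef, hWdef, mem_union, mem_filter, mem_univ, true_and, Fin.lt_def] at hmem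
      have := hij
      rw [Fin.lt_def] at this
      rcases ho with rfl | rfl <;> omega
    have hsub : insert o (Bset ∪ Wset) ⊆ univ.filter fun v => ℓ s < ℓ v := by
      intro t ht
      rcases mem_insert.mp ht with rfl | ht2
      · simp only [mem_filter, mem_univ, true_and]
        exact hone
      · rcases mem_union.mp ht2 with h | h <;>
          simp only [hBdef, hWdef, mem_filter, mem_univ, true_and] at h ⊢
        · exact h.2.2
        · exact h.2
    have hsum : Bset.card + Wset.card + 1 ≤ rk ℓ s := by
      have h1 : (insert o (Bset ∪ Wset)).card = Bset.card + Wset.card + 1 := by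
        rw [card_insert_of_notMem hno, card_union_of_disjoint hdisj]
      have h2 := card_le_card hsub
      rw [h1] at h2
      exact h2
    rcases (by omega : Bset.card ≤ k ∨ Wset.card ≤ k) with h | h
    · refine ⟨hne, ?_⟩
      rw [btwCount_eq hij, hmin]
      exact h
    · refine (heq i j).mpr ⟨hne, Or.inr ?_⟩
      rw [cycCount_wrap hij, hmin]
      exact h
  intro i j hne hi hj
  rcases lt_or_gt_of_ne hne with h | h
  · exact aux i j h hi hj
  · exact LinAdj_comm (aux j i h hj hi)

lemma rhs_to_eq {k : ℕ} {ℓ : Fin n → ℝ} (hn : 2 * k + 2 ≤ n)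
    (hinj : Function.Injective ℓ)
    (ha : ∀ i : Fin n, (i.val < k + 1 ∨ n - (k + 1) ≤ i.val) ↔ rk ℓ i < 2 * k + 2)
    (hb : ∀ i j : Fin n, i ≠ j → rk ℓ i < 2 * k + 2 → rk ℓ j < 2 * k + 2 → LinAdj k ℓ i j) :
    ∀ i j : Fin n, CylAdjF k ℓ i j → LinAdj k ℓ i j := by
  have aux : ∀ i j : Fin n, i < j → cycCount ℓ j i ≤ k → LinAdj k ℓ i j := by
    intro i j hij hW
    have hne : i ≠ j := ne_of_lt hij
    have hlne : ℓ i ≠ ℓ j := fun h => hne (hinj h)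
    rcases lt_or_gt_of_ne hlne with h | h
    · -- i is shorter
      by_cases hrk : rk ℓ i < 2 * k + 2
      · exact hb i j hne hrk (by have := rk_lt_rk h; omega)
      · exfalso
        push_neg at hrk
        have hpos : ¬ (i.val < k + 1 ∨ n - (k + 1) ≤ i.val) := by
          intro hcon
          exact absurd ((ha i).mp hcon) (by omega)
        push_neg at hpos
        have hblock : (univ.filter fun t : Fin n => t.val < k + 1) ⊆
            univ.filter fun t : Fin n => (j < t ∨ t < i) ∧ min (ℓ i) (ℓ j) < ℓ t := by
          intro t ht
          rw [mem_filter] at ht ⊢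
          have htk : rk ℓ t < 2 * k + 2 := (ha t).mp (Or.inl ht.2)
          refine ⟨mem_univ t, Or.inr ?_, ?_⟩
          · rw [Fin.lt_def]; omega
          · rw [min_eq_left h.le]
            exact lt_of_rk_lt hinj (by omega)
        have hcard := card_le_card hblock
        rw [card_val_lt (by omega)] at hcard
        rw [cycCount_wrap hij] at hW
        omega
    · -- j is shorter
      by_cases hrk : rk ℓ j < 2 * k + 2
      · exact hb i j hne (by have := rk_lt_rk h; omega) hrk
      · exfalso
        push_neg at hrk
        have hpos : ¬ (j.val < k + 1 ∨ n - (k + 1) ≤ j.val) := by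
          intro hcon
          exact absurd ((ha j).mp hcon) (by omega)
        push_neg at hpos
        have hblock : (univ.filter fun t : Fin n => n - (k + 1) ≤ t.val) ⊆
            univ.filter fun t : Fin n => (j < t ∨ t < i) ∧ min (ℓ i) (ℓ j) < ℓ t := by
          intro t ht
          rw [mem_filter] at ht ⊢
          have htk : rk ℓ t < 2 * k + 2 := (ha t).mp (Or.inr ht.2)
          refine ⟨mem_univ t, Or.inl ?_, ?_⟩
          · rw [Fin.lt_def]; omega
          · rw [min_eq_right h.le]
            exact lt_of_rk_lt hinj (by omega)
        have hcard := card_le_card hblock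
        rw [card_val_ge (by omega)] at hcard
        rw [cycCount_wrap hij] at hW
        omega
  rintro i j ⟨hne, hc⟩
  rcases lt_or_gt_of_ne hne with hij | hij
  · rcases hc with h | h
    · exact ⟨hne, by rw [← cycCount_eq_btw hij]; exact h⟩
    · exact aux i j hij h
  · rcases hc with h | h
    · exact LinAdj_comm (aux j i hij h)
    · refine ⟨hne, ?_⟩
      rw [btwCount_comm, ← cycCount_eq_btw hij]
      exact h


/-- curling a linear semi-bar `k`-visibility representation with distinct lengths
into a cylinder yields the same graph iff the top `k+1` and bottom `k+1` bars comprise the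
`2k+2` longest bars and those `2k+2` longest bars are pairwise visible in the linear
representation. -/
theorem stmt8 (k : ℕ) (hn : 2 * k + 2 ≤ n) (ℓ : Fin n → ℝ)
    (hinj : Function.Injective ℓ) :
    (∀ i j : Fin n, LinAdj k ℓ i j ↔ CylAdjF k ℓ i j) ↔
      ((∀ i : Fin n, (i.val < k + 1 ∨ n - (k + 1) ≤ i.val) ↔
          (univ.filter fun v => ℓ i < ℓ v).card < 2 * k + 2) ∧
       (∀ i j : Fin n, i ≠ j →
          (univ.filter fun v => ℓ i < ℓ v).card < 2 * k + 2 →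
          (univ.filter fun v => ℓ j < ℓ v).card < 2 * k + 2 → LinAdj k ℓ i j)) := by
  constructor
  · intro heq
    exact ⟨part_a hn hinj heq, part_b hinj heq⟩
  · rintro ⟨ha, hb⟩ i j
    exact ⟨lin_to_cyl, rhs_to_eq hn hinj ha hb i j⟩
end

section
/- In any maximal (k+2)-quasiplanar convex geometric representation on n points in convex position (a set E of chords with no k+2 pairwise crossing, such that adding any chord creates k+2 pairwise crossing chords), every j-pair with j ≤ k is an edge: if the chord {u,v} has exactly j points of the vertex set strictly on one side with j ≤ k, then {u,v} ∈ E. -/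
open Finset
open scoped Classical

variable {n : ℕ}

lemma xor_aux {A B C D : Prop} (hA : A ↔ ¬C) (hB : B ↔ ¬D) : Xor' A B → Xor' C D := by
  show Xor A B → Xor C D
  rw [xor_def, xor_def]; tauto

lemma mem_arc_compl_s9 [NeZero n] {u v t : ZMod n} (huv : u ≠ v) (htu : t ≠ u) (htv : t ≠ v) :
    t ∈ Arc u v ↔ t ∉ Arc v u := by
  have hn : 0 < n := NeZero.pos n
  simp only [Arc, mem_filter, mem_univ, true_and]
  set a := (t - u).val with ha'
  set b := (v - u).val with hb'
  have ha : 0 < a := ZMod.val_pos.mpr (sub_ne_zero.mpr htu)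
  have hb : 0 < b := ZMod.val_pos.mpr (sub_ne_zero.mpr huv.symm)
  have hab : a ≠ b := by
    intro h
    exact htv (by have := ZMod.val_injective n h; linear_combination this)
  have haln : a < n := ZMod.val_lt _
  have hbln : b < n := ZMod.val_lt _
  have huvval : (u - v).val = n - b := by
    have : NeZero (v - u) := ⟨sub_ne_zero.mpr huv.symm⟩
    rw [show u - v = -(v - u) by ring, ZMod.val_neg_of_ne_zero]
  rcases lt_or_gt_of_ne hab with h | h
  · have htvval : (t - v).val = n - (b - a) := by
      have hne : v - u - (t - u) ≠ 0 := by
        intro hz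
        apply htv
        have : v - u = t - u := by linear_combination hz
        linear_combination this.symm
      have : NeZero (v - u - (t - u)) := ⟨hne⟩
      rw [show t - v = -((v - u) - (t - u)) by ring, ZMod.val_neg_of_ne_zero,
        ZMod.val_sub (le_of_lt h)]
    constructor
    · intro _ hc
      rw [htvval, huvval] at hc
      omega
    · intro _
      exact ⟨ha, h⟩
  · have htvval : (t - v).val = a - b := by
      rw [show t - v = (t - u) - (v - u) by ring, ZMod.val_sub (le_of_lt h)]
    constructor
    · intro hc
      omega
    · intro hnin
      exfalso
      apply hnin
      rw [htvval, huvval]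
      omega

/-- in a maximal `(k+2)`-quasiplanar convex geometric representation, every
`j`-pair with `j ≤ k` (a chord with exactly `j` vertices on one open side) is an edge. -/
theorem stmt9 (k : ℕ) [NeZero n] (G : SimpleGraph (ZMod n))
    (hq : QuasiPlanar (k + 2) G) (hmax : MaximalQP (k + 2) G)
    (u v : ZMod n) (huv : u ≠ v) (j : ℕ) (hj : j ≤ k)
    (hpair : (Arc u v).card = j ∨ (Arc v u).card = j) :
    G.Adj u v := by
  by_contra hadj
  obtain ⟨f, g, hAdj, hCross⟩ := not_not.mp (hmax u v huv hadj)
  have hfg : ∀ p, G.Adj (f p) (g p) ∨ ((f p = u ∧ g p = v) ∨ (f p = v ∧ g p = u)) := by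
    intro p
    rcases hAdj p with h | h
    · exact Or.inl h
    · rw [SimpleGraph.fromEdgeSet_adj, Set.mem_singleton_iff] at h
      exact Or.inr (Sym2.eq_iff.mp h.1)
  have hex : ∃ p, (f p = u ∧ g p = v) ∨ (f p = v ∧ g p = u) := by
    by_contra h
    exact hq ⟨f, g, fun p => (hfg p).resolve_right (fun hc => h ⟨p, hc⟩), hCross⟩
  obtain ⟨p₀, hp₀⟩ := hex
  have key : ∀ q, q ≠ p₀ →
      (Xor' (f q ∈ Arc u v) (g q ∈ Arc u v) ∧ Xor' (f q ∈ Arc v u) (g q ∈ Arc v u)) := by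
    intro q hq'
    have hc := hCross p₀ q (Ne.symm hq')
    obtain ⟨h1, h2, h3, h4, h5, h6, h7⟩ := hc
    rcases hp₀ with ⟨hfu, hgv⟩ | ⟨hfv, hgu⟩
    · rw [hfu] at h3 h4; rw [hgv] at h5 h6; rw [hfu, hgv] at h7
      have hA := mem_arc_compl_s9 huv (Ne.symm h3) (Ne.symm h5)
      have hB := mem_arc_compl_s9 huv (Ne.symm h4) (Ne.symm h6)
      constructor
      · exact h7
      · exact xor_aux hA hB h7
    · rw [hfv] at h3 h4; rw [hgu] at h5 h6; rw [hfv, hgu] at h7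
      have hA := mem_arc_compl_s9 huv.symm (Ne.symm h3) (Ne.symm h5)
      have hB := mem_arc_compl_s9 huv.symm (Ne.symm h4) (Ne.symm h6)
      constructor
      · exact xor_aux hA hB h7
      · exact h7
  obtain ⟨w₁, w₂, hcard, hxor⟩ :
      ∃ w₁ w₂ : ZMod n, (Arc w₁ w₂).card = j ∧
        ∀ q, q ≠ p₀ → Xor' (f q ∈ Arc w₁ w₂) (g q ∈ Arc w₁ w₂) := by
    rcases hpair with hc | hc
    · exact ⟨u, v, hc, fun q hq' => (key q hq').1⟩
    · exact ⟨v, u, hc, fun q hq' => (key q hq').2⟩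
  set e : Fin (k + 2) → ZMod n := fun q => if f q ∈ Arc w₁ w₂ then f q else g q with he
  have hmaps : ∀ q ∈ univ.erase p₀, e q ∈ Arc w₁ w₂ := by
    intro q hq'
    have hq'' := (mem_erase.mp hq').1
    have hx := hxor q hq''
    simp only [he]
    split
    · assumption
    · rcases hx with ⟨hf, _⟩ | ⟨hg, _⟩
      · tauto
      · exact hg
  have hcard2 : (Arc w₁ w₂).card < (univ.erase p₀).card := by
    rw [card_erase_of_mem (mem_univ _), card_univ, Fintype.card_fin, hcard]
    omega
  obtain ⟨q, hq1, q', hq2, hne, heq⟩ :=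
    exists_ne_map_eq_of_card_lt_of_maps_to hcard2 hmaps
  obtain ⟨_, _, h3, h4, h5, h6, _⟩ := hCross q q' hne
  simp only [he] at heq
  split at heq <;> split at heq <;> [exact h3 heq; exact h4 heq; exact h5 heq; exact h6 heq]
end

section
/- For every k ≥ 1 there exists a (k+2)-quasiplanar convex geometric graph that is not a subgraph of any cylindrical semi-bar k-visibility graph. Specifically, the drawing D on 4(k+1) cyclically ordered vertices v_1, …, v_{4(k+1)} with chords {v_i, v_{3(k+1)+1−i}} and {v_{k+1+i}, v_{4(k+1)+1−i}} for 1 ≤ i ≤ k+1 is (k+2)-quasiplanar, but every maximal (k+2)-quasiplanar convex geometric representation containing D has minimum degree at least 2k+3, hence is not (2k+2)-degenerate. -/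
open Finset
open scoped Classical

variable {n : ℕ}

-- auxiliary lemmas
lemma val_sub' [NeZero n] (a b : ZMod n) :
    (a - b).val = (a.val + (n - b.val)) % n := by
  by_cases hb : b = 0
  · subst hb
    rw [sub_zero, ZMod.val_zero, Nat.sub_zero, Nat.add_mod_right,
      Nat.mod_eq_of_lt (ZMod.val_lt a)]
  · haveI : NeZero b := ⟨hb⟩
    rw [sub_eq_add_neg, ZMod.val_add, ZMod.val_neg_of_ne_zero]

lemma mod_small {x : ℕ} (hn : 0 < n) (hx : x < 2 * n) :
    x % n = if x < n then x else x - n := by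
  split_ifs with h
  · exact Nat.mod_eq_of_lt h
  · rw [Nat.mod_eq_sub_mod (le_of_not_gt h), Nat.mod_eq_of_lt (by omega)]

lemma mem_Arc_iff [NeZero n] {a b t : ZMod n} (hab : a ≠ b) :
    t ∈ Arc a b ↔ (if a.val < b.val then a.val < t.val ∧ t.val < b.val
      else a.val < t.val ∨ t.val < b.val) := by
  have hA := ZMod.val_lt a; have hB := ZMod.val_lt b; have hT := ZMod.val_lt t
  have hne : a.val ≠ b.val := fun h => hab (ZMod.val_injective n h)
  have hn0 : 0 < n := NeZero.pos n
  simp only [Arc, mem_filter, mem_univ, true_and]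
  rw [val_sub' t a, val_sub' b a, mod_small hn0 (by omega), mod_small hn0 (by omega)]
  split_ifs <;> omega

lemma arc_compl [NeZero n] {a b t : ZMod n} (hab : a ≠ b) (hta : t ≠ a) (htb : t ≠ b) :
    t ∈ Arc b a ↔ t ∉ Arc a b := by
  have hne : a.val ≠ b.val := fun h => hab (ZMod.val_injective n h)
  have h1 : t.val ≠ a.val := fun h => hta (ZMod.val_injective n h)
  have h2 : t.val ≠ b.val := fun h => htb (ZMod.val_injective n h)
  rw [mem_Arc_iff hab, mem_Arc_iff hab.symm]
  split_ifs <;> omega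

lemma not_crosses_of_iff [NeZero n] {a b c d : ZMod n}
    (h : c ∈ Arc a b ↔ d ∈ Arc a b) : ¬ Crosses a b c d := by
  intro hC
  exact (xor_iff_not_iff _ _).mp hC.2.2.2.2.2.2 h

lemma card_Arc_le [NeZero n] (v : ZMod n) (d : ℕ) (hdn : d < n) :
    (Arc v (v + (d : ZMod n))).card ≤ d - 1 := by
  have h := Finset.card_le_card_of_injOn (fun t => (t - v).val)
    (s := Arc v (v + (d : ZMod n))) (t := Finset.Ioo 0 d) ?_ ?_
  · simpa [Nat.card_Ioo] using h
  · intro t ht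
    simp only [Finset.mem_coe, Arc, mem_filter, mem_univ, true_and] at ht
    have hdd : ((v + (d:ℕ)) - v) = ((d:ℕ) : ZMod n) := by ring
    rw [hdd, ZMod.val_natCast, Nat.mod_eq_of_lt hdn] at ht
    simp only [Finset.mem_coe, Finset.mem_Ioo]
    exact ⟨ht.1, ht.2⟩
  · intro t _ t' _ hv
    have := ZMod.val_injective n hv
    exact sub_left_inj.mp this

lemma keyA_s11 (k : ℕ) [NeZero n] (hn : n = 4 * (k + 1))
    {i j : ℕ} (hi1 : 1 ≤ i) (hi2 : i ≤ k + 1) (hj1 : 1 ≤ j) (hj2 : j ≤ k + 1)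
    {a b c d : ZMod n}
    (hab : s(a, b) = s(((i : ℕ) : ZMod n), ((3 * (k + 1) + 1 - i : ℕ) : ZMod n)))
    (hcd : s(c, d) = s(((j : ℕ) : ZMod n), ((3 * (k + 1) + 1 - j : ℕ) : ZMod n))) :
    ¬ Crosses a b c d := by
  subst hn
  have h1 : ((i : ℕ) : ZMod (4 * (k + 1))).val = i := by
    rw [ZMod.val_natCast, Nat.mod_eq_of_lt (by omega)]
  have h2 : ((3 * (k + 1) + 1 - i : ℕ) : ZMod (4 * (k + 1))).val = 3 * (k + 1) + 1 - i := by
    rw [ZMod.val_natCast, Nat.mod_eq_of_lt (by omega)]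
  have h3 : ((j : ℕ) : ZMod (4 * (k + 1))).val = j := by
    rw [ZMod.val_natCast, Nat.mod_eq_of_lt (by omega)]
  have h4 : ((3 * (k + 1) + 1 - j : ℕ) : ZMod (4 * (k + 1))).val = 3 * (k + 1) + 1 - j := by
    rw [ZMod.val_natCast, Nat.mod_eq_of_lt (by omega)]
  have hne1 : ((i : ℕ) : ZMod (4 * (k + 1))) ≠ ((3 * (k + 1) + 1 - i : ℕ) : ZMod (4 * (k + 1))) := by
    intro h
    have := congrArg ZMod.val h
    rw [h1, h2] at this; omega
  rcases Sym2.eq_iff.mp hab with ⟨rfl, rfl⟩ | ⟨rfl, rfl⟩ <;>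
    rcases Sym2.eq_iff.mp hcd with ⟨rfl, rfl⟩ | ⟨rfl, rfl⟩ <;>
    apply not_crosses_of_iff <;>
    [rw [mem_Arc_iff hne1, mem_Arc_iff hne1];
     rw [mem_Arc_iff hne1, mem_Arc_iff hne1];
     rw [mem_Arc_iff hne1.symm, mem_Arc_iff hne1.symm];
     rw [mem_Arc_iff hne1.symm, mem_Arc_iff hne1.symm]] <;>
    rw [h1, h2, h3, h4] <;> split_ifs <;> omega

lemma keyB_s11 (k : ℕ) [NeZero n] (hn : n = 4 * (k + 1))
    {i j : ℕ} (hi1 : 1 ≤ i) (hi2 : i ≤ k + 1) (hj1 : 1 ≤ j) (hj2 : j ≤ k + 1)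
    {a b c d : ZMod n}
    (hab : s(a, b) = s(((k + 1 + i : ℕ) : ZMod n), ((4 * (k + 1) + 1 - i : ℕ) : ZMod n)))
    (hcd : s(c, d) = s(((k + 1 + j : ℕ) : ZMod n), ((4 * (k + 1) + 1 - j : ℕ) : ZMod n))) :
    ¬ Crosses a b c d := by
  subst hn
  have h1 : ((k + 1 + i : ℕ) : ZMod (4 * (k + 1))).val = k + 1 + i := by
    rw [ZMod.val_natCast, Nat.mod_eq_of_lt (by omega)]
  have h2 : ((4 * (k + 1) + 1 - i : ℕ) : ZMod (4 * (k + 1))).val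
      = if 4 * (k + 1) + 1 - i < 4 * (k + 1) then 4 * (k + 1) + 1 - i
        else 4 * (k + 1) + 1 - i - 4 * (k + 1) := by
    rw [ZMod.val_natCast, mod_small (by omega) (by omega)]
  have h3 : ((k + 1 + j : ℕ) : ZMod (4 * (k + 1))).val = k + 1 + j := by
    rw [ZMod.val_natCast, Nat.mod_eq_of_lt (by omega)]
  have h4 : ((4 * (k + 1) + 1 - j : ℕ) : ZMod (4 * (k + 1))).val
      = if 4 * (k + 1) + 1 - j < 4 * (k + 1) then 4 * (k + 1) + 1 - j
        else 4 * (k + 1) + 1 - j - 4 * (k + 1) := by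
    rw [ZMod.val_natCast, mod_small (by omega) (by omega)]
  have hne1 : ((k + 1 + i : ℕ) : ZMod (4 * (k + 1))) ≠ ((4 * (k + 1) + 1 - i : ℕ) : ZMod (4 * (k + 1))) := by
    intro h
    have := congrArg ZMod.val h
    rw [h1, h2] at this
    split_ifs at this <;> omega
  rcases Sym2.eq_iff.mp hab with ⟨rfl, rfl⟩ | ⟨rfl, rfl⟩ <;>
    rcases Sym2.eq_iff.mp hcd with ⟨rfl, rfl⟩ | ⟨rfl, rfl⟩ <;>
    apply not_crosses_of_iff <;>
    [rw [mem_Arc_iff hne1, mem_Arc_iff hne1];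
     rw [mem_Arc_iff hne1, mem_Arc_iff hne1];
     rw [mem_Arc_iff hne1.symm, mem_Arc_iff hne1.symm];
     rw [mem_Arc_iff hne1.symm, mem_Arc_iff hne1.symm]] <;>
    rw [h1, h2, h3, h4] <;> split_ifs <;> omega

lemma cast_add_ne [NeZero n] (v : ZMod n) {δ : ℕ} (h1 : 0 < δ) (h2 : δ < n) :
    v ≠ v + (δ : ZMod n) := by
  intro h
  have h0 : ((δ : ℕ) : ZMod n) = 0 := left_eq_add.mp h
  have := congrArg ZMod.val h0
  rw [ZMod.val_natCast, Nat.mod_eq_of_lt h2, ZMod.val_zero] at this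
  omega

lemma short_edge (k : ℕ) [NeZero n] (hn : n = 4 * (k + 1))
    (G : SimpleGraph (ZMod n)) (hQP : QuasiPlanar (k + 2) G) (hmax : MaximalQP (k + 2) G)
    (v : ZMod n) (d : ℕ) (hd1 : 1 ≤ d) (hd2 : d ≤ k + 1) :
    G.Adj v (v + (d : ZMod n)) := by
  by_contra hadj
  have hvne : v ≠ v + (d : ZMod n) := cast_add_ne v (by omega) (by omega)
  have hqp' := hmax v _ hvne hadj
  rw [QuasiPlanar, not_not] at hqp'
  obtain ⟨f, g, hadj', hcross⟩ := hqp'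
  have hex : ∃ p, s(f p, g p) = s(v, v + (d : ZMod n)) := by
    by_contra hc
    push_neg at hc
    refine hQP ⟨f, g, fun p => ?_, hcross⟩
    have h := hadj' p
    rw [SimpleGraph.sup_adj, SimpleGraph.fromEdgeSet_adj] at h
    rcases h with h | ⟨h, -⟩
    · exact h
    · exact absurd (by simpa using h) (hc p)
  obtain ⟨p, hp⟩ := hex
  have key : ∀ q, q ≠ p →
      Xor' (f q ∈ Arc v (v + (d : ZMod n))) (g q ∈ Arc v (v + (d : ZMod n))) := by
    intro q hq
    obtain ⟨hab, hcd, hac, had, hbc, hbd, hx⟩ := hcross p q (Ne.symm hq)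
    rcases Sym2.eq_iff.mp hp with ⟨h1, h2⟩ | ⟨h1, h2⟩
    · rw [h1, h2] at hx; exact hx
    · rw [h1] at hac had
      rw [h2] at hbc hbd
      rw [h1, h2] at hx
      rw [arc_compl hvne hbc.symm hac.symm, arc_compl hvne hbd.symm had.symm] at hx
      rw [Xor', xor_iff_not_iff] at hx ⊢
      tauto
  have hmem : ∀ q : Fin (k + 2), q ≠ p →
      (if f q ∈ Arc v (v + (d : ZMod n)) then f q else g q) ∈ Arc v (v + (d : ZMod n)) := by
    intro q hq
    have hx := key q hq
    rw [Xor', xor_iff_not_iff] at hx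
    split_ifs with h
    · exact h
    · tauto
  have hcard := Finset.card_le_card_of_injOn
    (fun q => if f q ∈ Arc v (v + (d : ZMod n)) then f q else g q)
    (s := (univ : Finset (Fin (k + 2))).erase p) (t := Arc v (v + (d : ZMod n)))
    (fun q hq => hmem q (Finset.mem_erase.mp hq).1) ?_
  · have hc1 : ((univ : Finset (Fin (k + 2))).erase p).card = k + 1 := by
      rw [Finset.card_erase_of_mem (mem_univ p), Finset.card_univ, Fintype.card_fin]
      omega
    have hc2 := card_Arc_le v d (by omega)
    omega
  · intro q hq q' hq' heq
    by_contra hqq'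
    obtain ⟨-, -, hA, hB, hC, hD, -⟩ := hcross q q' hqq'
    simp only at heq
    split_ifs at heq
    · exact hA heq
    · exact hB heq
    · exact hC heq
    · exact hD heq

lemma dchord (k : ℕ) [NeZero n] (hn : n = 4 * (k + 1)) (v : ZMod n) :
    ∃ δ : ℕ, k + 2 ≤ δ ∧ δ ≤ 3 * k + 2 ∧
      (SimpleGraph.fromEdgeSet { e | ∃ i : ℕ, 1 ≤ i ∧ i ≤ k + 1 ∧
        (e = s(((i : ℕ) : ZMod n), ((3 * (k + 1) + 1 - i : ℕ) : ZMod n)) ∨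
         e = s(((k + 1 + i : ℕ) : ZMod n), ((4 * (k + 1) + 1 - i : ℕ) : ZMod n))) }).Adj
        v (v + (δ : ZMod n)) := by
  subst hn
  have hv : ((v.val : ℕ) : ZMod (4 * (k + 1))) = v := ZMod.natCast_rightInverse v
  set m := v.val with hm
  have hmlt : m < 4 * (k + 1) := ZMod.val_lt v
  have hcast : ∀ x : ℕ, ((x + 4 * (k + 1) : ℕ) : ZMod (4 * (k + 1))) = (x : ZMod (4 * (k + 1))) := by
    intro x; rw [Nat.cast_add, ZMod.natCast_self, add_zero]
  have hadd : ∀ δ : ℕ, v + (δ : ZMod (4 * (k + 1))) = ((m + δ : ℕ) : ZMod (4 * (k + 1))) := by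
    intro δ; rw [← hv]; push_cast; ring
  have main : ∃ δ : ℕ, k + 2 ≤ δ ∧ δ ≤ 3 * k + 2 ∧ ∃ i : ℕ, 1 ≤ i ∧ i ≤ k + 1 ∧
      (s(v, v + (δ : ZMod (4 * (k + 1)))) =
          s(((i : ℕ) : ZMod (4 * (k + 1))), ((3 * (k + 1) + 1 - i : ℕ) : ZMod (4 * (k + 1)))) ∨
       s(v, v + (δ : ZMod (4 * (k + 1)))) =
          s(((k + 1 + i : ℕ) : ZMod (4 * (k + 1))), ((4 * (k + 1) + 1 - i : ℕ) : ZMod (4 * (k + 1))))) := by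
    rcases Nat.lt_or_ge m 1 with hc | hc1
    · -- m = 0, B chord with i = 1, δ = k+2
      refine ⟨k + 2, by omega, by omega, 1, le_refl 1, by omega, Or.inr ?_⟩
      rw [hadd, Sym2.eq_iff]
      right
      constructor
      · rw [← hv]
        have e1 : 4 * (k + 1) + 1 - 1 = 0 + 4 * (k + 1) := by omega
        have e2 : m = 0 := by omega
        rw [e1, hcast, e2]
      · have e1 : m + (k + 2) = k + 1 + 1 := by omega
        rw [e1]
    · rcases Nat.lt_or_ge m (k + 2) with hc2 | hc2
      · -- 1 ≤ m ≤ k+1, A chord i = m, δ = 3k+4-2m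
        refine ⟨3 * k + 4 - 2 * m, by omega, by omega, m, by omega, by omega, Or.inl ?_⟩
        rw [hadd, Sym2.eq_iff]
        left
        exact ⟨hv.symm, by rw [show m + (3 * k + 4 - 2 * m) = 3 * (k + 1) + 1 - m from by omega]⟩
      · rcases Nat.lt_or_ge m (2 * k + 3) with hc3 | hc3
        · -- k+2 ≤ m ≤ 2k+2, B chord i = m-k-1, δ = 5k+6-2m
          refine ⟨5 * k + 6 - 2 * m, by omega, by omega, m - k - 1, by omega, by omega, Or.inr ?_⟩
          rw [hadd, Sym2.eq_iff]
          left
          refine ⟨by rw [show k + 1 + (m - k - 1) = m from by omega, hv], ?_⟩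
          rw [show m + (5 * k + 6 - 2 * m) = 4 * (k + 1) + 1 - (m - k - 1) from by omega]
        · rcases Nat.lt_or_ge m (3 * k + 4) with hc4 | hc4
          · -- 2k+3 ≤ m ≤ 3k+3, A chord i = 3k+4-m, δ = 7k+8-2m
            refine ⟨7 * k + 8 - 2 * m, by omega, by omega, 3 * k + 4 - m, by omega, by omega, Or.inl ?_⟩
            rw [hadd, Sym2.eq_iff]
            right
            refine ⟨by rw [show 3 * (k + 1) + 1 - (3 * k + 4 - m) = m from by omega, hv], ?_⟩
            rw [show m + (7 * k + 8 - 2 * m) = (3 * k + 4 - m) + 4 * (k + 1) from by omega, hcast]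
          · -- 3k+4 ≤ m ≤ 4k+3, B chord i = 4k+5-m, δ = 9k+10-2m
            refine ⟨9 * k + 10 - 2 * m, by omega, by omega, 4 * k + 5 - m, by omega, by omega, Or.inr ?_⟩
            rw [hadd, Sym2.eq_iff]
            right
            refine ⟨by rw [show 4 * (k + 1) + 1 - (4 * k + 5 - m) = m from by omega, hv], ?_⟩
            rw [show m + (9 * k + 10 - 2 * m) = (k + 1 + (4 * k + 5 - m)) + 4 * (k + 1) from by omega, hcast]
  obtain ⟨δ, hδ1, hδ2, i, hi1, hi2, hor⟩ := main
  refine ⟨δ, hδ1, hδ2, ?_⟩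
  rw [SimpleGraph.fromEdgeSet_adj]
  exact ⟨⟨i, hi1, hi2, hor⟩, cast_add_ne v (by omega) (by omega)⟩

/-- for `k ≥ 1`, the drawing `D` on `4(k+1)` cyclically ordered vertices with
chords `{v_i, v_{3(k+1)+1-i}}` and `{v_{k+1+i}, v_{4(k+1)+1-i}}` for `1 ≤ i ≤ k+1` is
`(k+2)`-quasiplanar, but every maximal `(k+2)`-quasiplanar convex geometric representation
containing `D` has minimum degree at least `2k+3`, hence is not `(2k+2)`-degenerate (so its
graph is not a subgraph of any cylindrical semi-bar `k`-visibility graph). -/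
theorem stmt11 (k : ℕ) (hk : 1 ≤ k) [NeZero n] (hn : n = 4 * (k + 1))
    (D : SimpleGraph (ZMod n))
    (hD : D = SimpleGraph.fromEdgeSet { e | ∃ i : ℕ, 1 ≤ i ∧ i ≤ k + 1 ∧
        (e = s(((i : ℕ) : ZMod n), ((3 * (k + 1) + 1 - i : ℕ) : ZMod n)) ∨
         e = s(((k + 1 + i : ℕ) : ZMod n), ((4 * (k + 1) + 1 - i : ℕ) : ZMod n))) }) :
    QuasiPlanar (k + 2) D ∧
    ∀ G : SimpleGraph (ZMod n), D ≤ G → QuasiPlanar (k + 2) G → MaximalQP (k + 2) G →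
      (∀ v : ZMod n, 2 * k + 3 ≤ (univ.filter fun u => G.Adj v u).card) ∧
      ¬ (∀ S : Finset (ZMod n), S.Nonempty →
            ∃ v ∈ S, (S.filter fun u => G.Adj v u).card ≤ 2 * k + 2) := by
  subst hn
  subst hD
  constructor
  · rintro ⟨f, g, hadj, hcross⟩
    have hdata : ∀ p : Fin (k + 2), ∃ i : ℕ, 1 ≤ i ∧ i ≤ k + 1 ∧
        (s(f p, g p) = s(((i : ℕ) : ZMod (4 * (k + 1))), ((3 * (k + 1) + 1 - i : ℕ) : ZMod (4 * (k + 1)))) ∨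
         s(f p, g p) = s(((k + 1 + i : ℕ) : ZMod (4 * (k + 1))), ((4 * (k + 1) + 1 - i : ℕ) : ZMod (4 * (k + 1))))) := by
      intro p
      have h := hadj p
      rw [SimpleGraph.fromEdgeSet_adj] at h
      exact h.1
    have h01 : (⟨0, by omega⟩ : Fin (k + 2)) ≠ ⟨1, by omega⟩ := Fin.ne_of_val_ne (by simp)
    have h02 : (⟨0, by omega⟩ : Fin (k + 2)) ≠ ⟨2, by omega⟩ := Fin.ne_of_val_ne (by simp)
    have h12 : (⟨1, by omega⟩ : Fin (k + 2)) ≠ ⟨2, by omega⟩ := Fin.ne_of_val_ne (by simp)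
    obtain ⟨i0, hi0a, hi0b, h0⟩ := hdata ⟨0, by omega⟩
    obtain ⟨i1, hi1a, hi1b, h1⟩ := hdata ⟨1, by omega⟩
    obtain ⟨i2, hi2a, hi2b, h2⟩ := hdata ⟨2, by omega⟩
    rcases h0 with h0 | h0 <;> rcases h1 with h1 | h1 <;> rcases h2 with h2 | h2
    · exact keyA_s11 k rfl hi0a hi0b hi1a hi1b h0 h1 (hcross _ _ h01)
    · exact keyA_s11 k rfl hi0a hi0b hi1a hi1b h0 h1 (hcross _ _ h01)
    · exact keyA_s11 k rfl hi0a hi0b hi2a hi2b h0 h2 (hcross _ _ h02)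
    · exact keyB_s11 k rfl hi1a hi1b hi2a hi2b h1 h2 (hcross _ _ h12)
    · exact keyA_s11 k rfl hi1a hi1b hi2a hi2b h1 h2 (hcross _ _ h12)
    · exact keyB_s11 k rfl hi0a hi0b hi2a hi2b h0 h2 (hcross _ _ h02)
    · exact keyB_s11 k rfl hi0a hi0b hi1a hi1b h0 h1 (hcross _ _ h01)
    · exact keyB_s11 k rfl hi0a hi0b hi1a hi1b h0 h1 (hcross _ _ h01)
  · intro G hDG hQP hmax
    have hmin : ∀ v : ZMod (4 * (k + 1)), 2 * k + 3 ≤ (univ.filter fun u => G.Adj v u).card := by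
      intro v
      obtain ⟨δ, hδ1, hδ2, hadjD⟩ := dchord k rfl v
      have hadjδ : G.Adj v (v + (δ : ZMod (4 * (k + 1)))) := hDG hadjD
      set S : Finset ℕ := insert δ (Icc 1 (k + 1) ∪ Icc (3 * k + 3) (4 * k + 3)) with hS
      have hSsub : ∀ x ∈ S, 1 ≤ x ∧ x ≤ 4 * k + 3 := by
        intro x hx
        simp only [hS, Finset.mem_insert, Finset.mem_union, Finset.mem_Icc] at hx
        omega
      have hinj : Set.InjOn (fun d : ℕ => v + (d : ZMod (4 * (k + 1)))) S := by
        intro x hx y hy hxy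
        obtain ⟨hx1, hx2⟩ := hSsub x hx
        obtain ⟨hy1, hy2⟩ := hSsub y hy
        have h1 : ((x : ℕ) : ZMod (4 * (k + 1))) = ((y : ℕ) : ZMod (4 * (k + 1))) :=
          add_left_cancel hxy
        have h2 := congrArg ZMod.val h1
        rw [ZMod.val_natCast, ZMod.val_natCast,
          Nat.mod_eq_of_lt (by omega), Nat.mod_eq_of_lt (by omega)] at h2
        exact h2
      have hcardS : S.card = 2 * k + 3 := by
        rw [hS, Finset.card_insert_of_notMem (by
            simp only [Finset.mem_union, Finset.mem_Icc]
            push_neg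
            omega),
          Finset.card_union_of_disjoint (by
            rw [Finset.disjoint_left]
            intro a ha hb
            rw [Finset.mem_Icc] at ha hb
            omega),
          Nat.card_Icc, Nat.card_Icc]
        omega
      have hsub : S.image (fun d : ℕ => v + (d : ZMod (4 * (k + 1)))) ⊆
          univ.filter (fun u => G.Adj v u) := by
        intro u hu
        rw [Finset.mem_image] at hu
        obtain ⟨x, hx, rfl⟩ := hu
        rw [Finset.mem_filter]
        refine ⟨mem_univ _, ?_⟩
        simp only [hS, Finset.mem_insert, Finset.mem_union, Finset.mem_Icc] at hx
        rcases hx with rfl | hx | hx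
        · exact hadjδ
        · exact short_edge k rfl G hQP hmax v x hx.1 hx.2
        · have h1 : x + (4 * (k + 1) - x) = 4 * (k + 1) := by omega
          have h2 := short_edge k rfl G hQP hmax (v + (x : ZMod (4 * (k + 1))))
            (4 * (k + 1) - x) (by omega) (by omega)
          have h3 : v + (x : ZMod (4 * (k + 1))) + ((4 * (k + 1) - x : ℕ) : ZMod (4 * (k + 1))) = v := by
            rw [add_assoc, ← Nat.cast_add, h1, ZMod.natCast_self, add_zero]
          rw [h3] at h2
          exact h2.symm
      calc 2 * k + 3 = S.card := hcardS.symm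
        _ = (S.image (fun d : ℕ => v + (d : ZMod (4 * (k + 1))))).card :=
            (Finset.card_image_of_injOn hinj).symm
        _ ≤ _ := Finset.card_le_card hsub
    refine ⟨hmin, ?_⟩
    intro hdeg
    obtain ⟨v, -, hv⟩ := hdeg univ Finset.univ_nonempty
    have := hmin v
    omega
end
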